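/- arXiv:2505.01551 — 4 statements merged into one kernel-verified Lean document; each statement's English description precedes it below -/
import Mathlib

section
/- Let F : ℝ → ℝ be Lipschitz continuous, let ε > 0, and let γ denote the standard Gaussian measure on ℝ (mean 0, variance 1). Define the smoothed function F_ε(θ) = ∫ F(θ + ε z) dγ(z). Then F_ε is differentiable at every θ ∈ ℝ, and its derivative is given by the score-function formula F_ε'(θ) = (1/ε) ∫ F(θ + ε z) · z dγ(z). -/
open MeasureTheory ProbabilityTheory Real NNReal ENNReal

lemma gs_pdf_hasDerivAt (y t₀ : ℝ) (V : ℝ≥0) :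
    HasDerivAt (fun t => gaussianPDFReal t V y)
      ((y - t₀) / (V : ℝ) * gaussianPDFReal t₀ V y) t₀ := by
  have h0 : HasDerivAt (fun t : ℝ => y - t) (-1) t₀ := (hasDerivAt_id t₀).const_sub y
  have h1 : HasDerivAt (fun t : ℝ => -(y - t) ^ 2 / (2 * (V : ℝ)))
      ((y - t₀) / (V : ℝ)) t₀ := by
    have h2 := ((h0.pow 2).neg).div_const (2 * (V : ℝ))
    refine h2.congr_deriv ?_
    rcases eq_or_ne ((V : ℝ)) 0 with h | h
    · simp [h]
    · rw [show (2:ℕ) - 1 = 1 from rfl, pow_one, div_eq_div_iff (mul_ne_zero two_ne_zero h) h]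
      push_cast
      ring
  have h5 := (h1.exp).const_mul ((Real.sqrt (2 * Real.pi * (V : ℝ)))⁻¹)
  simp only [gaussianPDFReal]
  have he : (y - t₀) / (V : ℝ) *
      ((Real.sqrt (2 * Real.pi * (V : ℝ)))⁻¹ * rexp (-(y - t₀) ^ 2 / (2 * (V : ℝ))))
      = (Real.sqrt (2 * Real.pi * (V : ℝ)))⁻¹ *
        (rexp (-(y - t₀) ^ 2 / (2 * (V : ℝ))) * ((y - t₀) / (V : ℝ))) := by ring
  rw [he]
  exact h5

lemma gs_integrable_poly_gauss {b : ℝ} (hb : 0 < b) (θ : ℝ) :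
    Integrable (fun y : ℝ => (1 + (y - θ) ^ 2) * rexp (-(b * (y - θ) ^ 2))) := by
  have h1 := integrable_exp_neg_mul_sq hb
  have h2 := integrable_rpow_mul_exp_neg_mul_sq hb (s := 2) (by norm_num)
  have h2' : Integrable (fun x : ℝ => x ^ 2 * rexp (-b * x ^ 2)) := by
    have : ∀ x : ℝ, x ^ (2 : ℝ) = x ^ (2 : ℕ) := fun x => by
      rw [show (2 : ℝ) = ((2 : ℕ) : ℝ) by norm_num, Real.rpow_natCast]
    simpa [this] using h2
  have h3 : Integrable (fun x : ℝ => (1 + x ^ 2) * rexp (-(b * x ^ 2))) := by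
    have := h1.add h2'
    refine this.congr ?_
    filter_upwards with x
    simp only [Pi.add_apply, neg_mul]
    ring
  exact h3.comp_sub_right θ

lemma gs_map (ε : ℝ) (t : ℝ) (V : ℝ≥0) (hV : (V : ℝ) = ε ^ 2) :
    (gaussianReal 0 1).map (fun z => t + ε * z)
      = gaussianReal t V := by
  have hVeq : (NNReal.mk (ε ^ 2) (sq_nonneg ε) : ℝ≥0) * 1 = V := by
    rw [← NNReal.coe_inj]
    simp [hV]
  rw [← hVeq]
  have h1 : (gaussianReal 0 1).map (fun z => ε * z)
      = gaussianReal 0 (NNReal.mk (ε ^ 2) (sq_nonneg ε) * 1) := by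
    simpa using gaussianReal_map_const_mul (μ := 0) (v := 1) ε
  have h2 : (fun z => t + ε * z) = (fun x => t + x) ∘ (fun z => ε * z) := rfl
  rw [h2, ← Measure.map_map (measurable_const_add t) (measurable_const_mul ε), h1]
  simpa using gaussianReal_map_const_add (μ := 0) (v := NNReal.mk (ε ^ 2) (sq_nonneg ε) * 1) t

lemma gs_integral_withDensity {V : ℝ≥0} (hV : V ≠ 0) (t : ℝ) (g : ℝ → ℝ) :
    ∫ y, g y ∂(gaussianReal t V) = ∫ y, gaussianPDFReal t V y * g y := by
  rw [gaussianReal_of_var_ne_zero _ hV]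
  have hd : gaussianPDF t V = fun x => ((gaussianPDFReal t V x).toNNReal : ℝ≥0∞) := rfl
  rw [hd, integral_withDensity_eq_integral_smul
    ((measurable_gaussianPDFReal t V).real_toNNReal) g]
  congr 1
  ext y
  rw [NNReal.smul_def, smul_eq_mul, Real.coe_toNNReal _ (gaussianPDFReal_nonneg t V y)]

lemma gs_cont_pdf (t : ℝ) (V : ℝ≥0) : Continuous (fun y => gaussianPDFReal t V y) := by
  unfold gaussianPDFReal
  fun_prop

lemma gs_main (F : ℝ → ℝ) {K : ℝ≥0} (hF : LipschitzWith K F) (ε : ℝ) (hε : 0 < ε)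
    (θ : ℝ) (V : ℝ≥0) (hVr : (V : ℝ) = ε ^ 2) :
    HasDerivAt (fun t => ∫ y, F y * gaussianPDFReal t V y)
      (∫ y, F y * ((y - θ) / (V : ℝ) * gaussianPDFReal θ V y)) θ := by
  have hε2 : (0 : ℝ) < ε ^ 2 := by positivity
  set A : ℝ := |F θ| with hAdef
  have hA : 0 ≤ A := abs_nonneg _
  set c0 : ℝ := (Real.sqrt (2 * Real.pi * (V : ℝ)))⁻¹ with hc0def
  have hc0 : 0 ≤ c0 := by positivity
  set b : ℝ := (8 * ε ^ 2)⁻¹ with hbdef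
  have hb : 0 < b := by positivity
  set e1 : ℝ := rexp (1 / (2 * ε ^ 2)) with he1def
  have he1 : 0 < e1 := Real.exp_pos _
  set C1 : ℝ := 2 * A + 3 * (K : ℝ) + 2 with hC1def
  have hC1 : 0 ≤ C1 := by positivity
  -- `bound` for the dominated-differentiation theorem
  set bound : ℝ → ℝ :=
    fun y => C1 / ε ^ 2 * (c0 * e1) * ((1 + (y - θ) ^ 2) * rexp (-(b * (y - θ) ^ 2)))
    with hbounddef
  -- pdf upper bound on the unit ball around θ
  have hpdf_le : ∀ t : ℝ, |t - θ| ≤ 1 → ∀ y : ℝ,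
      gaussianPDFReal t V y ≤ c0 * (e1 * rexp (-(b * (y - θ) ^ 2))) := by
    intro t ht y
    have ht2 : (t - θ) ^ 2 ≤ 1 := by
      have := abs_le.mp ht
      nlinarith
    have hsq : (y - θ) ^ 2 / 4 - 1 ≤ (y - t) ^ 2 := by
      nlinarith [sq_nonneg ((y - θ) - 2 * (t - θ))]
    have hexp : -(y - t) ^ 2 / (2 * (V : ℝ)) ≤ 1 / (2 * ε ^ 2) + -(b * (y - θ) ^ 2) := by
      rw [hVr]
      have h1 : -(y - t) ^ 2 / (2 * ε ^ 2) ≤ -((y - θ) ^ 2 / 4 - 1) / (2 * ε ^ 2) := by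
        apply div_le_div_of_nonneg_right ?_ ?_ |>.trans_eq rfl
        · exact neg_le_neg hsq
        · positivity
      refine h1.trans_eq ?_
      rw [hbdef]
      field_simp
      ring
    calc gaussianPDFReal t V y = c0 * rexp (-(y - t) ^ 2 / (2 * (V : ℝ))) := rfl
      _ ≤ c0 * rexp (1 / (2 * ε ^ 2) + -(b * (y - θ) ^ 2)) :=
          mul_le_mul_of_nonneg_left (Real.exp_le_exp.mpr hexp) hc0
      _ = c0 * (e1 * rexp (-(b * (y - θ) ^ 2))) := by rw [Real.exp_add, he1def]
  -- linear growth of F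
  have hFb : ∀ y : ℝ, |F y| ≤ A + (K : ℝ) * |y - θ| := by
    intro y
    have h := hF.dist_le_mul y θ
    rw [Real.dist_eq, Real.dist_eq] at h
    calc |F y| = |F θ + (F y - F θ)| := by ring_nf
      _ ≤ |F θ| + |F y - F θ| := abs_add_le _ _
      _ ≤ A + (K : ℝ) * |y - θ| := by rw [hAdef]; linarith
  -- polynomial comparison
  have hpoly : ∀ u : ℝ, 0 ≤ u → (A + (K : ℝ) * u) * (u + 1) ≤ C1 * (1 + u ^ 2) := by
    intro u hu
    rw [hC1def]
    nlinarith [sq_nonneg (u - 1), K.coe_nonneg]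
  -- the key pointwise domination
  have hKey : ∀ t : ℝ, |t - θ| ≤ 1 → ∀ y : ℝ,
      |F y * ((y - t) / (V : ℝ) * gaussianPDFReal t V y)| ≤ bound y := by
    intro t ht y
    have hpdfnn := gaussianPDFReal_nonneg t V y
    have h1 : |F y * ((y - t) / (V : ℝ) * gaussianPDFReal t V y)|
        = |F y| * (|y - t| / ε ^ 2 * gaussianPDFReal t V y) := by
      rw [abs_mul, abs_mul, abs_div, abs_of_nonneg hpdfnn, hVr, abs_of_pos hε2]
    rw [h1]
    have hyt : |y - t| ≤ |y - θ| + 1 := by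
      have h2 : |y - t| = |(y - θ) - (t - θ)| := by ring_nf
      rw [h2]
      calc |(y - θ) - (t - θ)| ≤ |y - θ| + |t - θ| := abs_sub _ _
        _ ≤ |y - θ| + 1 := by linarith
    have hE := hpdf_le t ht y
    have hX : (0 : ℝ) ≤ c0 * (e1 * rexp (-(b * (y - θ) ^ 2))) := by positivity
    calc |F y| * (|y - t| / ε ^ 2 * gaussianPDFReal t V y)
        ≤ (A + (K : ℝ) * |y - θ|) *
            ((|y - θ| + 1) / ε ^ 2 * (c0 * (e1 * rexp (-(b * (y - θ) ^ 2))))) := by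
          have hFy := hFb y
          gcongr
      _ = ((A + (K : ℝ) * |y - θ|) * (|y - θ| + 1)) *
            ((c0 * (e1 * rexp (-(b * (y - θ) ^ 2)))) / ε ^ 2) := by ring
      _ ≤ (C1 * (1 + |y - θ| ^ 2)) *
            ((c0 * (e1 * rexp (-(b * (y - θ) ^ 2)))) / ε ^ 2) := by
          apply mul_le_mul_of_nonneg_right (hpoly _ (abs_nonneg _))
          positivity
      _ = bound y := by rw [hbounddef, sq_abs]; ring
  -- integrability of the bound
  have hbound_int : Integrable bound := by
    rw [hbounddef]
    exact (gs_integrable_poly_gauss hb θ).const_mul _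
  -- derivatives
  have hderivF : ∀ (y t₀ : ℝ), HasDerivAt (fun t => F y * gaussianPDFReal t V y)
      (F y * ((y - t₀) / (V : ℝ) * gaussianPDFReal t₀ V y)) t₀ :=
    fun y t₀ => (gs_pdf_hasDerivAt y t₀ V).const_mul (F y)
  -- apply dominated differentiation
  have hres := hasDerivAt_integral_of_dominated_loc_of_lip (μ := volume)
    (F := fun t y => F y * gaussianPDFReal t V y)
    (F' := fun y => F y * ((y - θ) / (V : ℝ) * gaussianPDFReal θ V y))
    (x₀ := θ) (bound := bound) (Metric.ball_mem_nhds θ one_pos)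
    (Filter.Eventually.of_forall fun t =>
      (hF.continuous.mul (gs_cont_pdf t V)).aestronglyMeasurable)
    ?hint
    ((hF.continuous.mul (((continuous_id.sub continuous_const).div_const _).mul
      (gs_cont_pdf θ V))).aestronglyMeasurable)
    ?hlip hbound_int
    (Filter.Eventually.of_forall fun y => hderivF y θ)
  · exact hres.2
  case hint =>
    refine Integrable.mono' (hbound_int.const_mul (ε ^ 2))
      ((hF.continuous.mul (gs_cont_pdf θ V)).aestronglyMeasurable) ?_
    filter_upwards with y
    have hθ : |θ - θ| ≤ (1 : ℝ) := by simp
    have h := hKey θ hθ y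
    have hpdfnn := gaussianPDFReal_nonneg θ V y
    rw [Real.norm_eq_abs]
    have hpdfle := hpdf_le θ hθ y
    have hFy := hFb y
    have hu : (0:ℝ) ≤ |y - θ| := abs_nonneg _
    have h2 : A + (K : ℝ) * |y - θ| ≤ C1 * (1 + |y - θ| ^ 2) := by
      have h3 := hpoly (|y - θ|) hu
      nlinarith [mul_nonneg (add_nonneg hA (mul_nonneg K.coe_nonneg hu)) hu]
    calc |F y * gaussianPDFReal θ V y|
        = |F y| * gaussianPDFReal θ V y := by rw [abs_mul, abs_of_nonneg hpdfnn]
      _ ≤ (A + (K : ℝ) * |y - θ|) * (c0 * (e1 * rexp (-(b * (y - θ) ^ 2)))) :=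
          mul_le_mul hFy hpdfle hpdfnn (by positivity)
      _ ≤ (C1 * (1 + |y - θ| ^ 2)) * (c0 * (e1 * rexp (-(b * (y - θ) ^ 2)))) :=
          mul_le_mul_of_nonneg_right h2 (by positivity)
      _ = ε ^ 2 * bound y := by rw [hbounddef, sq_abs]; field_simp
  case hlip =>
    filter_upwards with y
    apply (convex_ball θ 1).lipschitzOnWith_of_nnnorm_hasDerivWithin_le
      (f' := fun x => F y * ((y - x) / (V : ℝ) * gaussianPDFReal x V y))
      (fun x _ => (hderivF y x).hasDerivWithinAt)
    intro x hx
    rw [← NNReal.coe_le_coe, coe_nnnorm, Real.coe_nnabs, Real.norm_eq_abs]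
    have hx1 : |x - θ| ≤ 1 := by
      rw [Metric.mem_ball, Real.dist_eq] at hx
      exact hx.le
    exact (hKey x hx1 y).trans (le_abs_self _)

/-- Gaussian smoothing of a Lipschitz function is differentiable, with derivative given by
the score-function formula:
`F_ε'(θ) = (1/ε) ∫ F(θ + ε z) z dγ(z)` where `γ` is the standard Gaussian on `ℝ`. -/
theorem gaussian_smoothing_hasDerivAt
    (F : ℝ → ℝ) {K : NNReal} (hF : LipschitzWith K F)
    (ε : ℝ) (hε : 0 < ε) (θ : ℝ) :
    HasDerivAt (fun t => ∫ z, F (t + ε * z) ∂(gaussianReal 0 1))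
      ((1 / ε) * ∫ z, F (θ + ε * z) * z ∂(gaussianReal 0 1)) θ := by
  have hε2 : (0 : ℝ) < ε ^ 2 := by positivity
  set V : ℝ≥0 := Real.toNNReal (ε ^ 2) with hVdef
  have hVr : (V : ℝ) = ε ^ 2 := Real.coe_toNNReal _ hε2.le
  have hV0 : V ≠ 0 := by
    intro h
    rw [h] at hVr
    simp at hVr
    exact absurd hVr.symm hε2.ne'
  -- conversion of the smoothed function
  have hconv : ∀ t : ℝ, ∫ z, F (t + ε * z) ∂(gaussianReal 0 1)
      = ∫ y, F y * gaussianPDFReal t V y := by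
    intro t
    have hm : AEMeasurable (fun z : ℝ => t + ε * z) (gaussianReal 0 1) :=
      ((measurable_const_mul ε).const_add t).aemeasurable
    rw [← integral_map hm hF.continuous.aestronglyMeasurable, gs_map ε t V hVr,
      gs_integral_withDensity hV0 t]
    congr 1
    ext y
    ring
  -- conversion of the derivative value
  have hD : (1 / ε) * ∫ z, F (θ + ε * z) * z ∂(gaussianReal 0 1)
      = ∫ y, F y * ((y - θ) / (V : ℝ) * gaussianPDFReal θ V y) := by
    have hm : AEMeasurable (fun z : ℝ => θ + ε * z) (gaussianReal 0 1) :=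
      ((measurable_const_mul ε).const_add θ).aemeasurable
    have hg : AEStronglyMeasurable (fun y => F y * ((y - θ) / ε))
        ((gaussianReal 0 1).map (fun z => θ + ε * z)) :=
      (hF.continuous.mul ((continuous_id.sub continuous_const).div_const ε)).aestronglyMeasurable
    have h1 : ∫ z, F (θ + ε * z) * z ∂(gaussianReal 0 1)
        = ∫ y, F y * ((y - θ) / ε) ∂((gaussianReal 0 1).map (fun z => θ + ε * z)) := by
      rw [integral_map hm hg]
      congr 1
      ext z
      congr 1
      field_simp
      ring
    rw [h1, gs_map ε θ V hVr, gs_integral_withDensity hV0 θ, ← MeasureTheory.integral_const_mul]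
    congr 1
    ext y
    rw [hVr]
    field_simp
  rw [funext hconv, hD]
  exact gs_main F hF ε hε θ V hVr
end

section
/- Let F : ℝ → ℝ be Lipschitz continuous, let ε > 0, and let γ denote the standard Gaussian measure on ℝ (mean 0, variance 1). Define F_ε(θ) = ∫ F(θ + ε z) dγ(z). Then F_ε is twice differentiable at every θ ∈ ℝ, and its second derivative is given by F_ε''(θ) = (1/ε²) ∫ F(θ + ε z) · (z² − 1) dγ(z). -/
open MeasureTheory ProbabilityTheory Real

lemma aux_int1 (n : ℕ) {b : ℝ} (hb : 0 < b) :
    Integrable fun x : ℝ => |x| ^ n * rexp (-b * x ^ 2) := by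
  have h1 := integrable_exp_neg_mul_sq hb
  have h2 := (integrable_exp_neg_mul_sq (half_pos hb)).const_mul ((Nat.factorial n : ℝ) * (2 / b) ^ n)
  refine (h1.add h2).mono' ?_ ?_
  · exact (((continuous_abs.pow n).mul (by fun_prop)).aestronglyMeasurable)
  · filter_upwards with x
    have hx1 : |x| ^ n ≤ 1 + (x ^ 2) ^ n := by
      rcases le_or_gt |x| 1 with h | h
      · have := pow_le_one₀ (abs_nonneg x) h (n := n)
        nlinarith [pow_nonneg (sq_nonneg x) n]
      · have hle : |x| ≤ x ^ 2 := by nlinarith [abs_nonneg x, sq_abs x]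
        have := pow_le_pow_left₀ (abs_nonneg x) hle n
        linarith
    have hx2 : (x ^ 2) ^ n ≤ (Nat.factorial n : ℝ) * (2 / b) ^ n * rexp (b / 2 * x ^ 2) := by
      have h := Real.pow_div_factorial_le_exp (x := b / 2 * x ^ 2) (by positivity) n
      have hfac : (0:ℝ) < Nat.factorial n := by positivity
      rw [div_le_iff₀ hfac] at h
      calc (x ^ 2) ^ n = (b / 2 * x ^ 2) ^ n * (2 / b) ^ n := by
            rw [← mul_pow]; congr 1; field_simp
        _ ≤ rexp (b / 2 * x ^ 2) * (Nat.factorial n : ℝ) * (2 / b) ^ n := by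
            apply mul_le_mul_of_nonneg_right _ (by positivity)
            linarith
        _ = (Nat.factorial n : ℝ) * (2 / b) ^ n * rexp (b / 2 * x ^ 2) := by ring
    have hexp : rexp (b / 2 * x ^ 2) * rexp (-b * x ^ 2) = rexp (-(b/2) * x ^ 2) := by
      rw [← Real.exp_add]; ring_nf
    have hepos := Real.exp_pos (-b * x ^ 2)
    rw [Real.norm_eq_abs, abs_of_nonneg (by positivity)]
    calc |x| ^ n * rexp (-b * x ^ 2)
        ≤ (1 + (x ^ 2) ^ n) * rexp (-b * x ^ 2) := by
          apply mul_le_mul_of_nonneg_right hx1 hepos.le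
      _ = rexp (-b * x ^ 2) + (x ^ 2) ^ n * rexp (-b * x ^ 2) := by ring
      _ ≤ rexp (-b * x ^ 2) + (Nat.factorial n : ℝ) * (2 / b) ^ n * (rexp (b / 2 * x ^ 2) * rexp (-b * x ^ 2)) := by
          have := mul_le_mul_of_nonneg_right hx2 hepos.le
          nlinarith [this]
      _ = rexp (-b * x ^ 2) + (Nat.factorial n : ℝ) * (2 / b) ^ n * rexp (-(b/2) * x ^ 2) := by rw [hexp]

open scoped NNReal

lemma aux_int2 (n : ℕ) {b : ℝ} (hb : 0 < b) (θ : ℝ) :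
    Integrable fun y : ℝ => (1 + |y - θ|) ^ n * rexp (-b * (y - θ) ^ 2) := by
  have h : Integrable fun x : ℝ => (1 + |x|) ^ n * rexp (-b * x ^ 2) := by
    have h1 := (aux_int1 0 hb).const_mul ((2:ℝ) ^ n)
    have h2 := (aux_int1 n hb).const_mul ((2:ℝ) ^ n)
    refine ((h1.add h2).mono' ?_ ?_)
    · exact (((continuous_const.add continuous_abs).pow n).mul (by fun_prop)).aestronglyMeasurable
    · filter_upwards with x
      have h2n : (0:ℝ) < 2 ^ n := by positivity
      have hxn : (0:ℝ) ≤ |x| ^ n := by positivity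
      have hpow : (1 + |x|) ^ n ≤ 2 ^ n * (1 + |x| ^ n) := by
        rcases le_or_gt |x| 1 with h | h
        · have ha : (1 + |x|) ^ n ≤ 2 ^ n := by
            apply pow_le_pow_left₀ (by positivity)
            linarith
          nlinarith
        · have ha : (1 + |x|) ^ n ≤ (2 * |x|) ^ n := by
            apply pow_le_pow_left₀ (by positivity)
            linarith
          rw [mul_pow] at ha
          nlinarith
      have hepos := Real.exp_pos (-b * x ^ 2)
      rw [Real.norm_eq_abs, abs_of_nonneg (by positivity), Pi.add_apply]
      have := mul_le_mul_of_nonneg_right hpow hepos.le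
      calc (1 + |x|) ^ n * rexp (-b * x ^ 2)
          ≤ 2 ^ n * (1 + |x| ^ n) * rexp (-b * x ^ 2) := this
        _ = 2 ^ n * (|x| ^ 0 * rexp (-b * x ^ 2)) + 2 ^ n * (|x| ^ n * rexp (-b * x ^ 2)) := by
            ring
  exact h.comp_sub_right θ

lemma aux_pdf_deriv (V : ℝ≥0) (hV : 0 < (V : ℝ)) (y t : ℝ) :
    HasDerivAt (fun t => gaussianPDFReal t V y)
      ((y - t) / (V : ℝ) * gaussianPDFReal t V y) t := by
  have h1 : HasDerivAt (fun t : ℝ => y - t) (-1) t := (hasDerivAt_id t).const_sub y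
  have h2 : HasDerivAt (fun t : ℝ => -(y - t) ^ 2 / (2 * (V:ℝ))) ((y - t) / (V:ℝ)) t := by
    have h3 := ((h1.pow 2).neg).div_const (2 * (V:ℝ))
    refine h3.congr_deriv ?_
    field_simp
    ring
  have h4 := (h2.exp).const_mul (√(2 * π * (V:ℝ)))⁻¹
  simp only [gaussianPDFReal_def]
  refine h4.congr_deriv ?_
  ring

lemma aux_pdf_deriv2 (V : ℝ≥0) (hV : 0 < (V : ℝ)) (y t : ℝ) :
    HasDerivAt (fun t => (y - t) / (V : ℝ) * gaussianPDFReal t V y)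
      (((y - t) ^ 2 / (V : ℝ) ^ 2 - 1 / (V : ℝ)) * gaussianPDFReal t V y) t := by
  have h1 : HasDerivAt (fun t : ℝ => (y - t) / (V:ℝ)) (-1 / (V:ℝ)) t :=
    ((hasDerivAt_id t).const_sub y).div_const (V:ℝ)
  have h2 := h1.mul (aux_pdf_deriv V hV y t)
  refine h2.congr_deriv ?_
  field_simp
  ring

lemma aux_cov (ε : ℝ) (hε : 0 < ε) (f : ℝ → ℝ) (t : ℝ) :
    ∫ z, f (t + ε * z) ∂(gaussianReal 0 1) =
      ∫ y, gaussianPDFReal t ⟨ε ^ 2, sq_nonneg ε⟩ y * f y := by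
  set V : ℝ≥0 := ⟨ε ^ 2, sq_nonneg ε⟩ with hVdef
  have hV0 : V ≠ 0 := by
    intro h
    have : (V : ℝ) = 0 := by rw [h]; simp
    simp only [hVdef, NNReal.coe_mk] at this
    exact (pow_pos hε 2).ne' this
  have hmap : (gaussianReal 0 1).map (fun z => t + ε * z) = gaussianReal t V := by
    have h1 : (gaussianReal 0 1).map (fun z => ε * z) = gaussianReal 0 V := by
      have := gaussianReal_map_const_mul (μ := 0) (v := 1) ε
      rw [this, mul_zero, mul_one]; congr 1
    have h2 : ((gaussianReal 0 1).map (fun z => ε * z)).map (fun x => t + x)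
        = (gaussianReal 0 1).map (fun z => t + ε * z) := by
      rw [Measure.map_map (measurable_const_add t) (measurable_const_mul ε)]
      rfl
    rw [← h2, h1]
    have := gaussianReal_map_const_add (μ := 0) (v := V) t
    simpa using this
  have e : ℝ ≃ᵐ ℝ := ((Homeomorph.mulLeft₀ ε hε.ne').trans
    (Homeomorph.addLeft t)).toMeasurableEquiv
  have hemb : MeasurableEmbedding (fun z : ℝ => t + ε * z) := by
    have := (((Homeomorph.mulLeft₀ ε hε.ne').trans
      (Homeomorph.addLeft t)).toMeasurableEquiv).measurableEmbedding
    convert this using 1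
    rfl
  calc ∫ z, f (t + ε * z) ∂(gaussianReal 0 1)
      = ∫ y, f y ∂((gaussianReal 0 1).map (fun z => t + ε * z)) := (hemb.integral_map f).symm
    _ = ∫ y, f y ∂(gaussianReal t V) := by rw [hmap]
    _ = ∫ y, f y ∂(volume.withDensity (gaussianPDF t V)) := by
        rw [gaussianReal_of_var_ne_zero t hV0]
    _ = ∫ y, (gaussianPDFReal t V y).toNNReal • f y ∂volume := by
        rw [← integral_withDensity_eq_integral_smul
          ((measurable_gaussianPDFReal t V).real_toNNReal) f]
        rfl
    _ = ∫ y, gaussianPDFReal t V y * f y ∂volume := by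
        congr 1
        ext y
        rw [NNReal.smul_def, smul_eq_mul,
          Real.coe_toNNReal _ (gaussianPDFReal_nonneg t V y)]

lemma aux_pdf_bound (V : ℝ≥0) (hV : 0 < (V : ℝ)) (θ : ℝ) {t : ℝ}
    (ht : t ∈ Metric.ball θ 1) (y : ℝ) :
    gaussianPDFReal t V y ≤
      (√(2 * π * (V:ℝ)))⁻¹ * rexp (1 / (2 * (V:ℝ))) *
        rexp (-(1 / (4 * (V:ℝ))) * (y - θ) ^ 2) := by
  have ht1 : |t - θ| < 1 := by
    rw [Metric.mem_ball, Real.dist_eq] at ht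
    exact ht
  have ht2 : (t - θ) ^ 2 ≤ 1 := by nlinarith [sq_abs (t - θ), abs_nonneg (t - θ)]
  have hkey : -(y - t) ^ 2 / (2 * (V:ℝ)) ≤
      1 / (2 * (V:ℝ)) + -(1 / (4 * (V:ℝ))) * (y - θ) ^ 2 := by
    have h4V : (0:ℝ) < 4 * (V:ℝ) := by linarith
    have hsq : (y - θ) ^ 2 ≤ 2 * (y - t) ^ 2 + 2 := by
      nlinarith [sq_nonneg ((y - t) - (t - θ))]
    calc -(y - t) ^ 2 / (2 * (V:ℝ)) = (-2 * (y - t) ^ 2) / (4 * (V:ℝ)) := by ring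
      _ ≤ (2 - (y - θ) ^ 2) / (4 * (V:ℝ)) := by
          gcongr
          linarith
      _ = 1 / (2 * (V:ℝ)) + -(1 / (4 * (V:ℝ))) * (y - θ) ^ 2 := by field_simp; ring
  have hexp : rexp (-(y - t) ^ 2 / (2 * (V:ℝ))) ≤
      rexp (1 / (2 * (V:ℝ))) * rexp (-(1 / (4 * (V:ℝ))) * (y - θ) ^ 2) := by
    rw [← Real.exp_add]
    exact Real.exp_le_exp.mpr hkey
  simp only [gaussianPDFReal_def]
  calc (√(2 * π * (V:ℝ)))⁻¹ * rexp (-(y - t) ^ 2 / (2 * (V:ℝ)))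
      ≤ (√(2 * π * (V:ℝ)))⁻¹ * (rexp (1 / (2 * (V:ℝ))) * rexp (-(1 / (4 * (V:ℝ))) * (y - θ) ^ 2)) :=
        mul_le_mul_of_nonneg_left hexp (by positivity)
    _ = (√(2 * π * (V:ℝ)))⁻¹ * rexp (1 / (2 * (V:ℝ))) * rexp (-(1 / (4 * (V:ℝ))) * (y - θ) ^ 2) := by
        ring

lemma aux_pdf_cont (t : ℝ) (V : ℝ≥0) : Continuous (gaussianPDFReal t V) := by
  simp only [gaussianPDFReal_def]
  fun_prop

lemma aux_key (F : ℝ → ℝ) {K : ℝ≥0} (hF : LipschitzWith K F) (V : ℝ≥0) (hV : 0 < (V : ℝ))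
    (θ : ℝ) (g g' : ℝ → ℝ → ℝ)
    (hderiv : ∀ t y, HasDerivAt (fun s => g s y * gaussianPDFReal s V y)
      (g' t y * gaussianPDFReal t V y) t)
    (hgc : ∀ t, Continuous (g t)) (hg'c : Continuous (g' θ))
    (n : ℕ) (C : ℝ) (hC : 0 ≤ C)
    (hgb : ∀ t ∈ Metric.ball θ 1, ∀ y, |g t y| ≤ C * (1 + |y - θ|) ^ n)
    (hg'b : ∀ t ∈ Metric.ball θ 1, ∀ y, |g' t y| ≤ C * (1 + |y - θ|) ^ n) :
    HasDerivAt (fun t => ∫ y, g t y * gaussianPDFReal t V y * F y)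
      (∫ y, g' θ y * gaussianPDFReal θ V y * F y) θ := by
  set c0 : ℝ := (√(2 * π * (V:ℝ)))⁻¹ * rexp (1 / (2 * (V:ℝ))) with hc0
  have hc0pos : 0 < c0 := by positivity
  have hb : (0:ℝ) < 1 / (4 * (V:ℝ)) := by positivity
  set D : ℝ := C * c0 * ((K : ℝ) + |F θ|) with hD
  have hDnn : 0 ≤ D := by positivity
  set bound : ℝ → ℝ := fun y =>
    D * ((1 + |y - θ|) ^ (n + 1) * rexp (-(1 / (4 * (V:ℝ))) * (y - θ) ^ 2)) with hbd
  have hbound_int : Integrable bound volume := (aux_int2 (n + 1) hb θ).const_mul D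
  have hFle : ∀ y, |F y| ≤ ((K : ℝ) + |F θ|) * (1 + |y - θ|) := by
    intro y
    have h1 : |F y - F θ| ≤ (K : ℝ) * |y - θ| := by
      have := hF.dist_le_mul y θ
      rwa [Real.dist_eq, Real.dist_eq] at this
    have h2 : |F y| ≤ |F θ| + (K : ℝ) * |y - θ| := by
      have := abs_sub_abs_le_abs_sub (F y) (F θ)
      linarith
    nlinarith [abs_nonneg (y - θ), NNReal.coe_nonneg K, abs_nonneg (F θ)]
  have hmaster : ∀ (q : ℝ → ℝ), (∀ y, |q y| ≤ C * (1 + |y - θ|) ^ n) →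
      ∀ t ∈ Metric.ball θ 1, ∀ y, ‖q y * gaussianPDFReal t V y * F y‖ ≤ bound y := by
    intro q hq t ht y
    have hP := aux_pdf_bound V hV θ ht y
    have hPnn := gaussianPDFReal_nonneg t V y
    have h1 : 0 ≤ 1 + |y - θ| := by positivity
    calc ‖q y * gaussianPDFReal t V y * F y‖
        = |q y| * gaussianPDFReal t V y * |F y| := by
          rw [Real.norm_eq_abs, abs_mul, abs_mul, abs_of_nonneg hPnn]
      _ ≤ (C * (1 + |y - θ|) ^ n) * (c0 * rexp (-(1 / (4 * (V:ℝ))) * (y - θ) ^ 2)) *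
            (((K : ℝ) + |F θ|) * (1 + |y - θ|)) := by
          have hq' := hq y
          have hF' := hFle y
          gcongr
      _ = bound y := by rw [hbd]; ring
  have hcontP : ∀ t, Continuous fun y => g t y * gaussianPDFReal t V y * F y :=
    fun t => ((hgc t).mul (aux_pdf_cont t V)).mul hF.continuous
  have happ := hasDerivAt_integral_of_dominated_loc_of_deriv_le
    (μ := volume) (x₀ := θ) (s := Metric.ball θ 1) (Metric.ball_mem_nhds θ one_pos)
    (F := fun t y => g t y * gaussianPDFReal t V y * F y)
    (F' := fun t y => g' t y * gaussianPDFReal t V y * F y)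
    (bound := bound)
    (Filter.Eventually.of_forall fun t => (hcontP t).aestronglyMeasurable)
    ?_ ((hg'c.mul (aux_pdf_cont θ V)).mul hF.continuous).aestronglyMeasurable
    (Filter.Eventually.of_forall fun y t ht => hmaster (g' t) (hg'b t ht) t ht y)
    hbound_int
    (Filter.Eventually.of_forall fun y t _ => (hderiv t y).mul_const (F y))
  · exact happ.2
  · -- Integrable at θ
    refine hbound_int.mono' ((hcontP θ).aestronglyMeasurable) ?_
    filter_upwards with y
    exact hmaster (g θ) (hgb θ (Metric.mem_ball_self one_pos)) θ
      (Metric.mem_ball_self one_pos) y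

/-- Gaussian smoothing of a Lipschitz function is twice differentiable, with second
derivative `F_ε''(θ) = (1/ε²) ∫ F(θ + ε z) (z² − 1) dγ(z)` where `γ` is the standard
Gaussian on `ℝ`. -/
theorem gaussian_smoothing_second_deriv
    (F : ℝ → ℝ) {K : NNReal} (hF : LipschitzWith K F)
    (ε : ℝ) (hε : 0 < ε) :
    (∀ θ : ℝ, DifferentiableAt ℝ (fun t => ∫ z, F (t + ε * z) ∂(gaussianReal 0 1)) θ) ∧
    (∀ θ : ℝ, HasDerivAt (deriv (fun t => ∫ z, F (t + ε * z) ∂(gaussianReal 0 1)))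
      ((1 / ε ^ 2) * ∫ z, F (θ + ε * z) * (z ^ 2 - 1) ∂(gaussianReal 0 1)) θ) := by
  set V : ℝ≥0 := ⟨ε ^ 2, sq_nonneg ε⟩ with hVdef
  have hVc : (V : ℝ) = ε ^ 2 := rfl
  have hV : 0 < (V : ℝ) := by rw [hVc]; positivity
  have hGeq : (fun t => ∫ z, F (t + ε * z) ∂(gaussianReal 0 1))
      = fun t => ∫ y, (1 : ℝ) * gaussianPDFReal t V y * F y := by
    funext t
    rw [aux_cov ε hε F t]
    simp only [one_mul]
    rfl
  -- first derivative
  have h1 : ∀ θ' : ℝ, HasDerivAt (fun t => ∫ y, (1 : ℝ) * gaussianPDFReal t V y * F y)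
      (∫ y, (y - θ') / (V : ℝ) * gaussianPDFReal θ' V y * F y) θ' := by
    intro θ'
    refine aux_key F hF V hV θ' (fun _ _ => (1:ℝ)) (fun t y => (y - t) / (V : ℝ))
      ?_ (fun _ => continuous_const) (by fun_prop) 1 (1 + 1 / (V:ℝ)) (by positivity) ?_ ?_
    · intro t y
      simpa only [one_mul] using aux_pdf_deriv V hV y t
    · intro t ht y
      have hd : 0 ≤ |y - θ'| := abs_nonneg _
      have hu : 0 < 1 / (V:ℝ) := by positivity
      rw [abs_one, pow_one]
      nlinarith
    · intro t ht y
      have ht1 : |t - θ'| ≤ 1 := by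
        rw [Metric.mem_ball, Real.dist_eq] at ht
        linarith
      have habs : |y - t| ≤ 1 + |y - θ'| := by
        have h := abs_sub_le y θ' t
        have h2 : |θ' - t| = |t - θ'| := abs_sub_comm θ' t
        linarith
      have hd : 0 ≤ |y - θ'| := abs_nonneg _
      have hu : 0 < 1 / (V:ℝ) := by positivity
      calc |(y - t) / (V:ℝ)| = |y - t| * (1 / (V:ℝ)) := by
            rw [abs_div, abs_of_pos hV]; ring
        _ ≤ (1 + |y - θ'|) * (1 / (V:ℝ)) := mul_le_mul_of_nonneg_right habs hu.le
        _ ≤ (1 + 1 / (V:ℝ)) * (1 + |y - θ'|) ^ 1 := by rw [pow_one]; nlinarith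
  have hderiv_eq : deriv (fun t => ∫ z, F (t + ε * z) ∂(gaussianReal 0 1))
      = fun t => ∫ y, (y - t) / (V : ℝ) * gaussianPDFReal t V y * F y := by
    funext t
    rw [hGeq]
    exact (h1 t).deriv
  constructor
  · intro θ
    rw [hGeq]
    exact (h1 θ).differentiableAt
  · intro θ
    rw [hderiv_eq]
    have h2 : HasDerivAt (fun t => ∫ y, (y - t) / (V : ℝ) * gaussianPDFReal t V y * F y)
        (∫ y, ((y - θ) ^ 2 / (V : ℝ) ^ 2 - 1 / (V : ℝ)) * gaussianPDFReal θ V y * F y) θ := by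
      refine aux_key F hF V hV θ (fun t y => (y - t) / (V : ℝ))
        (fun t y => (y - t) ^ 2 / (V : ℝ) ^ 2 - 1 / (V : ℝ))
        (fun t y => aux_pdf_deriv2 V hV y t) (fun t => by fun_prop) (by fun_prop)
        2 (1 / (V:ℝ) + 1 / (V:ℝ) ^ 2) (by positivity) ?_ ?_
      · intro t ht y
        have ht1 : |t - θ| ≤ 1 := by
          rw [Metric.mem_ball, Real.dist_eq] at ht
          linarith
        have habs : |y - t| ≤ 1 + |y - θ| := by
          have h := abs_sub_le y θ t
          have h2 : |θ - t| = |t - θ| := abs_sub_comm θ t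
          linarith
        have hd : 0 ≤ |y - θ| := abs_nonneg _
        have hu : 0 < 1 / (V:ℝ) := by positivity
        have hu2 : 0 < 1 / (V:ℝ) ^ 2 := by positivity
        calc |(y - t) / (V:ℝ)| = |y - t| * (1 / (V:ℝ)) := by
              rw [abs_div, abs_of_pos hV]; ring
          _ ≤ (1 + |y - θ|) * (1 / (V:ℝ)) := mul_le_mul_of_nonneg_right habs hu.le
          _ ≤ (1 / (V:ℝ) + 1 / (V:ℝ) ^ 2) * (1 + |y - θ|) ^ 2 := by
              nlinarith [mul_nonneg (mul_nonneg hu.le (by positivity : (0:ℝ) ≤ 1 + |y - θ|)) hd,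
                mul_nonneg hu2.le (sq_nonneg (1 + |y - θ|))]
      · intro t ht y
        have ht1 : |t - θ| ≤ 1 := by
          rw [Metric.mem_ball, Real.dist_eq] at ht
          linarith
        have habs : |y - t| ≤ 1 + |y - θ| := by
          have h := abs_sub_le y θ t
          have h2 : |θ - t| = |t - θ| := abs_sub_comm θ t
          linarith
        have hd : 0 ≤ |y - θ| := abs_nonneg _
        have hu : 0 < 1 / (V:ℝ) := by positivity
        have hu2 : 0 < 1 / (V:ℝ) ^ 2 := by positivity
        have hsq : (y - t) ^ 2 ≤ (1 + |y - θ|) ^ 2 := by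
          have := sq_abs (y - t)
          nlinarith [abs_nonneg (y - t)]
        calc |(y - t) ^ 2 / (V:ℝ) ^ 2 - 1 / (V:ℝ)|
            ≤ |(y - t) ^ 2 / (V:ℝ) ^ 2| + |1 / (V:ℝ)| := abs_sub (_ : ℝ) _
          _ = (y - t) ^ 2 * (1 / (V:ℝ) ^ 2) + 1 / (V:ℝ) := by
              rw [abs_div, abs_div, abs_of_pos hV, abs_of_pos (pow_pos hV 2), abs_one,
                abs_of_nonneg (sq_nonneg (y - t))]
              ring
          _ ≤ (1 / (V:ℝ) + 1 / (V:ℝ) ^ 2) * (1 + |y - θ|) ^ 2 := by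
              have ha : (0:ℝ) ≤ (1 + |y - θ|) ^ 2 - 1 := by nlinarith
              have hb2 : (0:ℝ) ≤ (1 + |y - θ|) ^ 2 - (y - t) ^ 2 := by linarith
              nlinarith [mul_nonneg hu.le ha, mul_nonneg hu2.le hb2]
    convert h2 using 1
    have h3 : (fun z => F (θ + ε * z) * ((θ + ε * z - θ) ^ 2 / (V:ℝ) ^ 2 - 1 / (V:ℝ)))
        = fun z => (1 / ε ^ 2) * (F (θ + ε * z) * (z ^ 2 - 1)) := by
      funext z
      rw [hVc]
      have hε2 : ε ^ 2 ≠ 0 := by positivity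
      field_simp
      ring
    have hchg := aux_cov ε hε (fun x => F x * ((x - θ) ^ 2 / (V:ℝ) ^ 2 - 1 / (V:ℝ))) θ
    calc (1 / ε ^ 2) * ∫ z, F (θ + ε * z) * (z ^ 2 - 1) ∂(gaussianReal 0 1)
        = ∫ z, (1 / ε ^ 2) * (F (θ + ε * z) * (z ^ 2 - 1)) ∂(gaussianReal 0 1) :=
          (integral_const_mul _ _).symm
      _ = ∫ z, F (θ + ε * z) * ((θ + ε * z - θ) ^ 2 / (V:ℝ) ^ 2 - 1 / (V:ℝ))
            ∂(gaussianReal 0 1) := by rw [← h3]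
      _ = ∫ y, gaussianPDFReal θ V y *
            (F y * ((y - θ) ^ 2 / (V:ℝ) ^ 2 - 1 / (V:ℝ))) ∂volume := hchg
      _ = ∫ y, ((y - θ) ^ 2 / (V : ℝ) ^ 2 - 1 / (V : ℝ)) * gaussianPDFReal θ V y * F y := by
          congr 1
          funext y
          ring
end

section
/- Let n be a positive natural number and let γⁿ denote the standard Gaussian measure on ℝⁿ, i.e., the n-fold product of the one-dimensional Gaussian measure with mean 0 and variance 1. Let F : ℝⁿ → ℝ be Lipschitz continuous and let ε > 0. Define F_ε(θ) = ∫ F(θ + ε z) dγⁿ(z). Then F_ε is differentiable at every θ ∈ ℝⁿ, and for every direction v ∈ ℝⁿ its derivative satisfies DF_ε(θ)[v] = (1/ε) ∫ F(θ + ε z) · ⟨z, v⟩ dγⁿ(z), where ⟨·,·⟩ is the Euclidean inner product. -/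
open MeasureTheory ProbabilityTheory
open scoped ENNReal NNReal

lemma my_lintegral_fin_prod {n : ℕ} (f : Fin n → ℝ → ℝ≥0∞) (hf : ∀ i, Measurable (f i)) :
    ∫⁻ x : Fin n → ℝ, ∏ i, f i (x i) ∂(Measure.pi fun _ => (volume : Measure ℝ))
      = ∏ i, ∫⁻ t : ℝ, f i t := by
  induction n with
  | zero => simp [Measure.pi_of_empty]
  | succ n ih =>
      have hmp := (measurePreserving_piFinSuccAbove (fun _ : Fin (n+1) => (volume : Measure ℝ)) 0)
      have hmeas : Measurable fun p : ℝ × (Fin n → ℝ) => f 0 p.1 * ∏ i, f i.succ (p.2 i) := by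
        exact ((hf 0).comp measurable_fst).mul
          (Finset.measurable_prod _ fun (i : Fin n) _ =>
            (hf i.succ).comp (measurable_pi_apply i |>.comp measurable_snd))
      calc ∫⁻ x : Fin (n+1) → ℝ, ∏ i, f i (x i) ∂(Measure.pi fun _ => (volume : Measure ℝ))
          = ∫⁻ p : ℝ × (Fin n → ℝ), f 0 p.1 * ∏ i : Fin n, f i.succ (p.2 i)
              ∂((volume : Measure ℝ).prod (Measure.pi fun _ => (volume : Measure ℝ))) := by
            rw [← hmp.lintegral_comp hmeas]
            congr 1
            ext x
            simp [MeasurableEquiv.piFinSuccAbove, Fin.prod_univ_succ, Fin.zero_succAbove, Fin.tail]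
        _ = (∫⁻ t, f 0 t) * ∫⁻ y : Fin n → ℝ, ∏ i : Fin n, f i.succ (y i)
              ∂(Measure.pi fun _ => (volume : Measure ℝ)) :=
            lintegral_prod_mul (hf 0).aemeasurable
              (Finset.measurable_prod _ fun (i : Fin n) _ =>
                (hf i.succ).comp (measurable_pi_apply i)).aemeasurable
        _ = (∫⁻ t, f 0 t) * ∏ i : Fin n, ∫⁻ t, f i.succ t := by
            rw [ih (fun i => f i.succ) (fun i => hf i.succ)]
        _ = ∏ i, ∫⁻ t, f i t := (Fin.prod_univ_succ (fun i => ∫⁻ t, f i t)).symm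

lemma my_pi_gaussian (n : ℕ) :
    Measure.pi (fun _ : Fin n => gaussianReal 0 1)
      = (volume : Measure (Fin n → ℝ)).withDensity (fun z => ∏ i, gaussianPDF 0 1 (z i)) := by
  refine Measure.pi_eq fun s hs => ?_
  rw [withDensity_apply _ (MeasurableSet.univ_pi hs)]
  have key : ∀ z : Fin n → ℝ, (Set.univ.pi s).indicator (fun z => ∏ i, gaussianPDF 0 1 (z i)) z
      = ∏ i, (s i).indicator (gaussianPDF 0 1) (z i) := by
    intro z
    by_cases h : z ∈ Set.univ.pi s
    · rw [Set.indicator_of_mem h]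
      exact Finset.prod_congr rfl fun i _ => (Set.indicator_of_mem (h i trivial) _).symm
    · rw [Set.indicator_of_notMem h]
      obtain ⟨i, hi⟩ : ∃ i, z i ∉ s i := by simpa [Set.mem_pi] using h
      exact (Finset.prod_eq_zero (Finset.mem_univ i)
        (by simp [Set.indicator_of_notMem hi])).symm
  rw [← lintegral_indicator (MeasurableSet.univ_pi hs)]
  simp_rw [key]
  rw [show (volume : Measure (Fin n → ℝ)) = Measure.pi fun _ => (volume : Measure ℝ) from volume_pi]
  rw [my_lintegral_fin_prod _ (fun i => (measurable_gaussianPDF 0 1).indicator (hs i))]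
  refine Finset.prod_congr rfl fun i _ => ?_
  rw [gaussianReal_of_var_ne_zero _ one_ne_zero, withDensity_apply _ (hs i),
    ← lintegral_indicator (hs i)]

noncomputable def myRho {n : ℕ} (z : Fin n → ℝ) : ℝ := ∏ i, gaussianPDFReal 0 1 (z i)

lemma myRho_nonneg {n : ℕ} (z : Fin n → ℝ) : 0 ≤ myRho z :=
  Finset.prod_nonneg fun i _ => gaussianPDFReal_nonneg 0 1 (z i)

lemma myRho_eq {n : ℕ} (z : Fin n → ℝ) :
    myRho z = (Real.sqrt (2 * Real.pi))⁻¹ ^ n * Real.exp (-(∑ i, (z i) ^ 2) / 2) := by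
  simp only [myRho, gaussianPDFReal, NNReal.coe_one, mul_one, sub_zero, one_div]
  rw [Finset.prod_mul_distrib, Finset.prod_const, Finset.card_univ, Fintype.card_fin,
    ← Real.exp_sum]
  congr 1
  rw [← Finset.sum_div]
  congr 1
  simp [Finset.sum_neg_distrib]

lemma myRho_continuous {n : ℕ} : Continuous fun z : Fin n → ℝ => myRho z := by
  have : (fun z : Fin n → ℝ => myRho z)
      = fun z => (Real.sqrt (2 * Real.pi))⁻¹ ^ n * Real.exp (-(∑ i, (z i) ^ 2) / 2) :=
    funext fun z => myRho_eq z
  rw [this]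
  fun_prop

lemma my_integral_pi_gaussian {n : ℕ} (g : (Fin n → ℝ) → ℝ) :
    ∫ z, g z ∂(Measure.pi fun _ : Fin n => gaussianReal 0 1)
      = ∫ z, myRho z * g z := by
  rw [my_pi_gaussian]
  have h : (fun z : Fin n → ℝ => ∏ i, gaussianPDF 0 1 (z i))
      = fun z => (((fun z : Fin n → ℝ => ∏ i, (gaussianPDFReal 0 1 (z i)).toNNReal) z : ℝ≥0) : ℝ≥0∞) := by
    funext z
    rw [ENNReal.coe_finset_prod]
    rfl
  rw [h, integral_withDensity_eq_integral_smul
    (f := fun z : Fin n → ℝ => ∏ i, (gaussianPDFReal 0 1 (z i)).toNNReal)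
    (Finset.measurable_prod _ fun i _ =>
      (Measurable.comp (measurable_gaussianPDFReal 0 1) (measurable_pi_apply i)).real_toNNReal) g]
  congr 1
  funext z
  rw [NNReal.smul_def, NNReal.coe_prod, smul_eq_mul]
  congr 1
  exact Finset.prod_congr rfl fun i _ => Real.coe_toNNReal _ (gaussianPDFReal_nonneg 0 1 (z i))

lemma my_cov {n : ℕ} {ε : ℝ} (hε : 0 < ε) (t : Fin n → ℝ) (g : (Fin n → ℝ) → ℝ) :
    ∫ w : Fin n → ℝ, g (ε⁻¹ • (w - t)) = ε ^ n * ∫ z : Fin n → ℝ, g z := by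
  have h1 : ∫ w : Fin n → ℝ, g (ε⁻¹ • (w - t))
      = ∫ w : Fin n → ℝ, (fun u => g (ε⁻¹ • u)) (w - t) := rfl
  rw [h1, integral_sub_right_eq_self (fun u => g (ε⁻¹ • u)) t,
    Measure.integral_comp_smul volume g ε⁻¹]
  have : |((ε⁻¹ : ℝ) ^ Module.finrank ℝ (Fin n → ℝ))⁻¹| = ε ^ n := by
    rw [Module.finrank_pi, Fintype.card_fin]
    rw [abs_of_pos (by positivity)]
    rw [inv_pow, inv_inv]
  rw [this, smul_eq_mul]

noncomputable def myL {n : ℕ} (x : Fin n → ℝ) : (Fin n → ℝ) →L[ℝ] ℝ :=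
  ∑ i, x i • ContinuousLinearMap.proj i

lemma myL_apply {n : ℕ} (x v : Fin n → ℝ) : myL x v = ∑ i, x i * v i := by
  simp [myL]

lemma myL_norm_le {n : ℕ} (x : Fin n → ℝ) : ‖myL x‖ ≤ ∑ i, |x i| := by
  refine ContinuousLinearMap.opNorm_le_bound _ (by positivity) fun v => ?_
  rw [myL_apply]
  calc ‖∑ i, x i * v i‖ ≤ ∑ i, ‖x i * v i‖ := norm_sum_le _ _
    _ ≤ ∑ i, |x i| * ‖v‖ := by
        refine Finset.sum_le_sum fun i _ => ?_
        rw [norm_mul]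
        exact mul_le_mul_of_nonneg_left (norm_le_pi_norm v i) (norm_nonneg _)
    _ = (∑ i, |x i|) * ‖v‖ := (Finset.sum_mul _ _ _).symm

lemma myL_continuous {n : ℕ} : Continuous (fun x : Fin n → ℝ => myL x) := by
  unfold myL
  exact continuous_finset_sum _ fun i _ => ((continuous_apply i).smul continuous_const)

lemma myQ_hasFDerivAt {n : ℕ} (x : Fin n → ℝ) :
    HasFDerivAt (fun z : Fin n → ℝ => ∑ i, (z i) ^ 2) ((2 : ℝ) • myL x) x := by
  have h : ∀ i : Fin n, HasFDerivAt (fun z : Fin n → ℝ => (z i) ^ 2)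
      ((2 * x i) • (ContinuousLinearMap.proj i : (Fin n → ℝ) →L[ℝ] ℝ)) x := by
    intro i
    have hp : HasFDerivAt (fun z : Fin n → ℝ => z i)
        (ContinuousLinearMap.proj i : (Fin n → ℝ) →L[ℝ] ℝ) x :=
      (ContinuousLinearMap.proj i : (Fin n → ℝ) →L[ℝ] ℝ).hasFDerivAt
    have h2 := hp.fun_mul hp
    have he : (fun z : Fin n → ℝ => z i * z i) = fun z => (z i) ^ 2 := by
      funext z; ring
    rw [he] at h2
    refine h2.congr_fderiv ?_
    rw [two_mul, add_smul]
  have := HasFDerivAt.fun_sum (fun i (_ : i ∈ Finset.univ) => h i)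
  refine this.congr_fderiv ?_
  rw [myL, Finset.smul_sum]
  exact Finset.sum_congr rfl fun i _ => by rw [smul_smul]

lemma myRho_hasFDerivAt {n : ℕ} (x : Fin n → ℝ) :
    HasFDerivAt (fun z : Fin n → ℝ => myRho z) ((-myRho x) • myL x) x := by
  have h1 : HasFDerivAt (fun z : Fin n → ℝ => -(∑ i, (z i) ^ 2) / 2)
      ((-(2 : ℝ)⁻¹) • ((2 : ℝ) • myL x)) x := by
    have := (myQ_hasFDerivAt x).const_mul (-(2 : ℝ)⁻¹)
    refine this.congr_of_eventuallyEq (Filter.Eventually.of_forall fun z => ?_)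
    ring
  have h2 := h1.exp
  have h3 := h2.const_mul ((Real.sqrt (2 * Real.pi))⁻¹ ^ n)
  have heq : (fun z : Fin n → ℝ =>
      (Real.sqrt (2 * Real.pi))⁻¹ ^ n * Real.exp (-(∑ i, (z i) ^ 2) / 2))
      = fun z : Fin n → ℝ => myRho z := by
    funext z; rw [myRho_eq]
  rw [heq] at h3
  refine h3.congr_fderiv ?_
  rw [smul_smul, smul_smul, smul_smul, myRho_eq]
  congr 1
  ring

lemma myPhi_hasFDerivAt {n : ℕ} {ε : ℝ} (w t : Fin n → ℝ) (c : ℝ) :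
    HasFDerivAt (fun t' : Fin n → ℝ => c * myRho (ε⁻¹ • (w - t')))
      ((c * (ε⁻¹ * myRho (ε⁻¹ • (w - t)))) • myL (ε⁻¹ • (w - t))) t := by
  have hid : HasFDerivAt (fun t' : Fin n → ℝ => w - t')
      (-(ContinuousLinearMap.id ℝ (Fin n → ℝ))) t := (hasFDerivAt_id t).const_sub w
  have hm := hid.const_smul ε⁻¹
  have hcomp := (myRho_hasFDerivAt (ε⁻¹ • (w - t))).comp t hm
  have hfin := hcomp.const_mul c
  refine hfin.congr_fderiv ?_
  ext v
  simp only [ContinuousLinearMap.smul_apply, ContinuousLinearMap.coe_comp',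
    Function.comp_apply, ContinuousLinearMap.neg_apply, ContinuousLinearMap.id_apply,
    Pi.smul_apply, Pi.neg_apply, _root_.map_smul, map_neg, smul_eq_mul]
  ring

lemma myBound_integrable {n : ℕ} {ε : ℝ} (hε : 0 < ε) (θ : Fin n → ℝ) (M : ℝ) :
    Integrable (fun w : Fin n → ℝ =>
      M * Real.exp (-(∑ i, ((ε⁻¹ • (w - θ)) i) ^ 2) / 8)) volume := by
  set v : ℝ≥0 := ⟨4 * ε ^ 2, by positivity⟩ with hv
  have hvr : (v : ℝ) = 4 * ε ^ 2 := rfl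
  set c : ℝ := Real.sqrt (2 * Real.pi * (4 * ε ^ 2)) with hc
  have hcpos : 0 < c := Real.sqrt_pos.mpr (by positivity)
  have key : ∀ w : Fin n → ℝ, Real.exp (-(∑ i, ((ε⁻¹ • (w - θ)) i) ^ 2) / 8)
      = ∏ i, (c * gaussianPDFReal (θ i) v (w i)) := by
    intro w
    have hco : ∀ i : Fin n, c * gaussianPDFReal (θ i) v (w i)
        = Real.exp (-(((ε⁻¹ • (w - θ)) i) ^ 2) / 8) := by
      intro i
      simp only [gaussianPDFReal, hvr, one_div, Pi.smul_apply, Pi.sub_apply, smul_eq_mul]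
      rw [← mul_assoc, mul_inv_cancel₀ (by positivity), one_mul]
      have hε' : ε ≠ 0 := ne_of_gt hε
      congr 1
      rw [mul_pow, inv_pow, neg_div, neg_div]
      congr 1
      rw [div_eq_div_iff (by positivity) (by norm_num)]
      field_simp
      ring
    rw [Finset.prod_congr rfl fun i _ => hco i, ← Real.exp_sum]
    congr 1
    rw [← Finset.sum_div]
    congr 1
    simp [Finset.sum_neg_distrib]
  have hint : Integrable (fun w : Fin n → ℝ => ∏ i, (c * gaussianPDFReal (θ i) v (w i))) volume := by
    have := MeasureTheory.Integrable.fintype_prod (𝕜 := ℝ)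
      (f := fun (i : Fin n) (u : ℝ) => c * gaussianPDFReal (θ i) v u)
      (fun i => (integrable_gaussianPDFReal (θ i) v).const_mul c)
    exact this
  have := hint.const_mul M
  refine this.congr ?_
  filter_upwards with w
  rw [key w]

set_option maxHeartbeats 1000000 in
lemma myBound_pointwise {n : ℕ} (hn : 0 < n) {ε : ℝ} (hε : 0 < ε) {K : ℝ≥0}
    {F : (Fin n → ℝ) → ℝ} (hF : LipschitzWith K F) (θ : Fin n → ℝ) {t : Fin n → ℝ}
    (w : Fin n → ℝ) (ht : t ∈ Metric.ball θ ε) :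
    ‖(F w * (ε⁻¹ * myRho (ε⁻¹ • (w - t)))) • myL (ε⁻¹ • (w - t))‖
      ≤ (ε⁻¹ * ((|F θ| + 2 * K * ε * n) * ((3 * n) *
          ((Real.sqrt (2 * Real.pi))⁻¹ ^ n * Real.exp (n / 2)))))
        * Real.exp (-(∑ i, ((ε⁻¹ • (w - θ)) i) ^ 2) / 8) := by
  have hεne : ε ≠ 0 := ne_of_gt hε
  have hK0 : (0 : ℝ) ≤ K := K.coe_nonneg
  have hn1 : (1 : ℝ) ≤ n := by exact_mod_cast hn
  set x : Fin n → ℝ := ε⁻¹ • (w - t) with hx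
  set y : Fin n → ℝ := ε⁻¹ • (w - θ) with hy
  set Q : ℝ := ∑ i, (y i) ^ 2 with hQ
  set Qx : ℝ := ∑ i, (x i) ^ 2 with hQx
  set S : ℝ := ∑ i, |y i| with hS
  set Sx : ℝ := ∑ i, |x i| with hSx
  set C : ℝ := (Real.sqrt (2 * Real.pi))⁻¹ ^ n with hC
  set E : ℝ := Real.exp (Q / 16) with hE
  have hQ0 : 0 ≤ Q := Finset.sum_nonneg fun i _ => sq_nonneg _
  have hQx0 : 0 ≤ Qx := Finset.sum_nonneg fun i _ => sq_nonneg _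
  have hS0 : 0 ≤ S := Finset.sum_nonneg fun i _ => abs_nonneg _
  have hC0 : 0 ≤ C := by positivity
  have hE1 : 1 ≤ E := Real.one_le_exp (by positivity)
  have hA0 : 0 ≤ |F θ| := abs_nonneg _
  have hd : ∀ i, |x i - y i| ≤ 1 := by
    intro i
    have : x i - y i = ε⁻¹ * (θ i - t i) := by
      simp only [hx, hy, Pi.smul_apply, Pi.sub_apply, smul_eq_mul]
      ring
    rw [this, abs_mul, abs_of_pos (inv_pos.mpr hε)]
    have h1 : |θ i - t i| ≤ ‖t - θ‖ := by
      have := norm_le_pi_norm (t - θ) i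
      simp only [Pi.sub_apply, Real.norm_eq_abs] at this
      rw [abs_sub_comm]
      exact this
    have h2 : ‖t - θ‖ < ε := by rwa [Metric.mem_ball, dist_eq_norm] at ht
    calc ε⁻¹ * |θ i - t i| ≤ ε⁻¹ * ε := by
          exact mul_le_mul_of_nonneg_left (le_of_lt (lt_of_le_of_lt h1 h2))
            (le_of_lt (inv_pos.mpr hε))
      _ = 1 := inv_mul_cancel₀ hεne
  have h2 : Q ≤ 2 * Qx + 2 * n := by
    have : ∀ i : Fin n, (y i) ^ 2 ≤ 2 * (x i) ^ 2 + 2 := by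
      intro i
      have hdi := hd i
      have h1 := abs_le.mp hdi
      nlinarith [sq_nonneg (x i + (x i - y i))]
    calc Q ≤ ∑ i : Fin n, (2 * (x i) ^ 2 + 2) := Finset.sum_le_sum fun i _ => this i
      _ = 2 * Qx + 2 * n := by
          rw [Finset.sum_add_distrib, ← Finset.mul_sum, Finset.sum_const, Finset.card_univ,
            Fintype.card_fin, nsmul_eq_mul]
          ring
  have h3 : S ≤ 2 * n + Q / 8 := by
    have : ∀ i : Fin n, |y i| ≤ 2 + (y i) ^ 2 / 8 := by
      intro i
      nlinarith [sq_nonneg (|y i| - 4), sq_abs (y i)]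
    calc S ≤ ∑ i : Fin n, (2 + (y i) ^ 2 / 8) := Finset.sum_le_sum fun i _ => this i
      _ = 2 * n + Q / 8 := by
          rw [Finset.sum_add_distrib, Finset.sum_const, Finset.card_univ, Fintype.card_fin,
            nsmul_eq_mul, ← Finset.sum_div]
          ring
  have h3' : S ≤ 2 * n * E := by
    have := Real.add_one_le_exp (Q / 16)
    nlinarith
  have hSxS : Sx ≤ S + n := by
    have : ∀ i : Fin n, |x i| ≤ |y i| + 1 := by
      intro i
      have := hd i
      have h1 := abs_sub_abs_le_abs_sub (x i) (y i)
      linarith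
    calc Sx ≤ ∑ i : Fin n, (|y i| + 1) := Finset.sum_le_sum fun i _ => this i
      _ = S + n := by
          rw [Finset.sum_add_distrib, Finset.sum_const, Finset.card_univ, Fintype.card_fin,
            nsmul_eq_mul]
          ring
  have hSx3 : Sx ≤ 3 * n * E := by nlinarith
  have hSx0 : 0 ≤ Sx := Finset.sum_nonneg fun i _ => abs_nonneg _
  have hFw : |F w| ≤ |F θ| + K * (ε * S) := by
    have h1 : |F w - F θ| ≤ K * ‖w - θ‖ := by
      have := hF.dist_le_mul w θ
      rwa [Real.dist_eq, dist_eq_norm] at this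
    have h2 : ‖w - θ‖ ≤ ε * S := by
      rw [pi_norm_le_iff_of_nonneg (by positivity)]
      intro i
      have hyi : |w i - θ i| = ε * |y i| := by
        have : y i = ε⁻¹ * (w i - θ i) := by
          simp only [hy, Pi.smul_apply, Pi.sub_apply, smul_eq_mul]
        rw [this, abs_mul, abs_of_pos (inv_pos.mpr hε), ← mul_assoc,
          mul_inv_cancel₀ hεne, one_mul]
      have hiS : |y i| ≤ S := Finset.single_le_sum (fun j _ => abs_nonneg (y j))
        (Finset.mem_univ i)
      calc ‖(w - θ) i‖ = |w i - θ i| := by simp [Real.norm_eq_abs]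
        _ = ε * |y i| := hyi
        _ ≤ ε * S := mul_le_mul_of_nonneg_left hiS (le_of_lt hε)
    calc |F w| ≤ |F θ| + |F w - F θ| := by
          have := abs_sub_abs_le_abs_sub (F w) (F θ); linarith
      _ ≤ |F θ| + K * (ε * S) := by
          have : (K : ℝ) * ‖w - θ‖ ≤ K * (ε * S) := mul_le_mul_of_nonneg_left h2 hK0
          linarith
  have hFw' : |F w| ≤ (|F θ| + 2 * K * ε * n) * E := by
    have h1 : (K : ℝ) * (ε * S) ≤ K * (ε * (2 * n * E)) := by
      refine mul_le_mul_of_nonneg_left ?_ hK0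
      exact mul_le_mul_of_nonneg_left h3' (le_of_lt hε)
    nlinarith
  have hexpx : Real.exp (-Qx / 2) ≤ Real.exp ((n : ℝ) / 2) * Real.exp (-Q / 4) := by
    rw [← Real.exp_add]
    exact Real.exp_le_exp.mpr (by linarith)
  have hns := norm_smul (F w * (ε⁻¹ * myRho x)) (myL x)
  rw [hns, Real.norm_eq_abs, abs_mul, abs_mul, abs_of_pos (inv_pos.mpr hε),
    abs_of_nonneg (myRho_nonneg _)]
  have hLx : ‖myL x‖ ≤ Sx := myL_norm_le x
  have hrho : myRho x = C * Real.exp (-Qx / 2) := by rw [myRho_eq]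
  have hexp8 : E * Real.exp (-Q / 4) * E = Real.exp (-Q / 8) := by
    rw [← Real.exp_add, ← Real.exp_add]
    congr 1
    ring
  have hX : ε⁻¹ * (C * Real.exp (-Qx / 2))
      ≤ ε⁻¹ * (C * (Real.exp ((n : ℝ) / 2) * Real.exp (-Q / 4))) :=
    mul_le_mul_of_nonneg_left (mul_le_mul_of_nonneg_left hexpx hC0)
      (le_of_lt (inv_pos.mpr hε))
  have e1 : |F w| * (ε⁻¹ * (C * Real.exp (-Qx / 2)))
      ≤ ((|F θ| + 2 * K * ε * n) * E)
        * (ε⁻¹ * (C * (Real.exp ((n : ℝ) / 2) * Real.exp (-Q / 4)))) :=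
    mul_le_mul hFw' hX (by positivity) (by positivity)
  have e2 : |F w| * (ε⁻¹ * (C * Real.exp (-Qx / 2))) * ‖myL x‖
      ≤ ((|F θ| + 2 * K * ε * n) * E)
        * (ε⁻¹ * (C * (Real.exp ((n : ℝ) / 2) * Real.exp (-Q / 4)))) * (3 * n * E) :=
    mul_le_mul e1 (hLx.trans hSx3) (norm_nonneg _) (by positivity)
  rw [hrho]
  refine le_trans e2 (le_of_eq ?_)
  rw [← hexp8]
  ring

lemma myPhi_bound {n : ℕ} (hn : 0 < n) {ε : ℝ} (hε : 0 < ε) {K : ℝ≥0}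
    {F : (Fin n → ℝ) → ℝ} (hF : LipschitzWith K F) (θ : Fin n → ℝ) (w : Fin n → ℝ) :
    |F w * myRho (ε⁻¹ • (w - θ))|
      ≤ ((|F θ| + 2 * K * ε * n) * (Real.sqrt (2 * Real.pi))⁻¹ ^ n)
        * Real.exp (-(∑ i, ((ε⁻¹ • (w - θ)) i) ^ 2) / 8) := by
  have hεne : ε ≠ 0 := ne_of_gt hε
  have hK0 : (0 : ℝ) ≤ K := K.coe_nonneg
  have hn1 : (1 : ℝ) ≤ n := by exact_mod_cast hn
  set y : Fin n → ℝ := ε⁻¹ • (w - θ) with hy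
  set Q : ℝ := ∑ i, (y i) ^ 2 with hQ
  set S : ℝ := ∑ i, |y i| with hS
  set C : ℝ := (Real.sqrt (2 * Real.pi))⁻¹ ^ n with hC
  set E : ℝ := Real.exp (Q / 16) with hE
  have hQ0 : 0 ≤ Q := Finset.sum_nonneg fun i _ => sq_nonneg _
  have hS0 : 0 ≤ S := Finset.sum_nonneg fun i _ => abs_nonneg _
  have hC0 : 0 ≤ C := by positivity
  have hE1 : 1 ≤ E := Real.one_le_exp (by positivity)
  have hA0 : 0 ≤ |F θ| := abs_nonneg _
  have h3 : S ≤ 2 * n + Q / 8 := by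
    have : ∀ i : Fin n, |y i| ≤ 2 + (y i) ^ 2 / 8 := by
      intro i
      nlinarith [sq_nonneg (|y i| - 4), sq_abs (y i)]
    calc S ≤ ∑ i : Fin n, (2 + (y i) ^ 2 / 8) := Finset.sum_le_sum fun i _ => this i
      _ = 2 * n + Q / 8 := by
          rw [Finset.sum_add_distrib, Finset.sum_const, Finset.card_univ, Fintype.card_fin,
            nsmul_eq_mul, ← Finset.sum_div]
          ring
  have h3' : S ≤ 2 * n * E := by
    have := Real.add_one_le_exp (Q / 16)
    nlinarith
  have hFw : |F w| ≤ |F θ| + K * (ε * S) := by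
    have h1 : |F w - F θ| ≤ K * ‖w - θ‖ := by
      have := hF.dist_le_mul w θ
      rwa [Real.dist_eq, dist_eq_norm] at this
    have h2 : ‖w - θ‖ ≤ ε * S := by
      rw [pi_norm_le_iff_of_nonneg (by positivity)]
      intro i
      have hyi : |w i - θ i| = ε * |y i| := by
        have : y i = ε⁻¹ * (w i - θ i) := by
          simp only [hy, Pi.smul_apply, Pi.sub_apply, smul_eq_mul]
        rw [this, abs_mul, abs_of_pos (inv_pos.mpr hε), ← mul_assoc,
          mul_inv_cancel₀ hεne, one_mul]
      have hiS : |y i| ≤ S := Finset.single_le_sum (fun j _ => abs_nonneg (y j))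
        (Finset.mem_univ i)
      calc ‖(w - θ) i‖ = |w i - θ i| := by simp [Real.norm_eq_abs]
        _ = ε * |y i| := hyi
        _ ≤ ε * S := mul_le_mul_of_nonneg_left hiS (le_of_lt hε)
    calc |F w| ≤ |F θ| + |F w - F θ| := by
          have := abs_sub_abs_le_abs_sub (F w) (F θ); linarith
      _ ≤ |F θ| + K * (ε * S) := by
          have : (K : ℝ) * ‖w - θ‖ ≤ K * (ε * S) := mul_le_mul_of_nonneg_left h2 hK0
          linarith
  have hFw' : |F w| ≤ (|F θ| + 2 * K * ε * n) * E := by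
    have h1 : (K : ℝ) * (ε * S) ≤ K * (ε * (2 * n * E)) := by
      refine mul_le_mul_of_nonneg_left ?_ hK0
      exact mul_le_mul_of_nonneg_left h3' (le_of_lt hε)
    nlinarith
  have hrho : myRho y = C * Real.exp (-Q / 2) := by rw [myRho_eq]
  have hEQ : E * Real.exp (-Q / 2) ≤ Real.exp (-Q / 8) := by
    rw [← Real.exp_add]
    exact Real.exp_le_exp.mpr (by linarith)
  rw [abs_mul, abs_of_nonneg (myRho_nonneg _), hrho]
  calc |F w| * (C * Real.exp (-Q / 2))
      ≤ ((|F θ| + 2 * K * ε * n) * E) * (C * Real.exp (-Q / 2)) :=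
        mul_le_mul_of_nonneg_right hFw' (by positivity)
    _ = ((|F θ| + 2 * K * ε * n) * C) * (E * Real.exp (-Q / 2)) := by ring
    _ ≤ ((|F θ| + 2 * K * ε * n) * C) * Real.exp (-Q / 8) :=
        mul_le_mul_of_nonneg_left hEQ (by positivity)

/-- Multidimensional Gaussian smoothing of a Lipschitz function is differentiable, with
directional derivative given by the score-function formula
`DF_ε(θ)[v] = (1/ε) ∫ F(θ + ε z) ⟨z, v⟩ dγⁿ(z)`, where `γⁿ` is the standard Gaussian
measure on `ℝⁿ` (the `n`-fold product of the standard Gaussian on `ℝ`). -/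
theorem gaussian_smoothing_hasFDerivAt_multidim
    (n : ℕ) (hn : 0 < n)
    (F : (Fin n → ℝ) → ℝ) {K : NNReal} (hF : LipschitzWith K F)
    (ε : ℝ) (hε : 0 < ε) (θ : Fin n → ℝ) :
    ∃ D : (Fin n → ℝ) →L[ℝ] ℝ,
      HasFDerivAt
        (fun t => ∫ z, F (t + ε • z) ∂(Measure.pi fun _ : Fin n => gaussianReal 0 1)) D θ ∧
      ∀ v : Fin n → ℝ,
        D v = (1 / ε) *
          ∫ z, F (θ + ε • z) * (∑ i, z i * v i)
            ∂(Measure.pi fun _ : Fin n => gaussianReal 0 1) := by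
  have hεne : ε ≠ 0 := ne_of_gt hε
  have hxw : ∀ t : Fin n → ℝ, Continuous fun w : Fin n → ℝ => ε⁻¹ • (w - t) :=
    fun t => (continuous_id.sub continuous_const).const_smul ε⁻¹
  have hΦcont : ∀ t : Fin n → ℝ, Continuous fun w : Fin n → ℝ => F w * myRho (ε⁻¹ • (w - t)) :=
    fun t => hF.continuous.mul (myRho_continuous.comp (hxw t))
  have hΦ'cont : ∀ t : Fin n → ℝ, Continuous fun w : Fin n → ℝ =>
      (F w * (ε⁻¹ * myRho (ε⁻¹ • (w - t)))) • myL (ε⁻¹ • (w - t)) := fun t =>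
    (hF.continuous.mul (continuous_const.mul (myRho_continuous.comp (hxw t)))).smul
      (myL_continuous.comp (hxw t))
  -- integrability of Φ θ
  have hΦint : Integrable (fun w : Fin n → ℝ => F w * myRho (ε⁻¹ • (w - θ))) volume := by
    refine Integrable.mono'
      (myBound_integrable hε θ ((|F θ| + 2 * K * ε * n) * (Real.sqrt (2 * Real.pi))⁻¹ ^ n))
      ((hΦcont θ).aestronglyMeasurable) ?_
    filter_upwards with w
    rw [Real.norm_eq_abs]
    exact myPhi_bound hn hε hF θ w
  -- integrability of Φ' θ
  have hΦ'int : Integrable (fun w : Fin n → ℝ =>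
      (F w * (ε⁻¹ * myRho (ε⁻¹ • (w - θ)))) • myL (ε⁻¹ • (w - θ))) volume := by
    refine Integrable.mono'
      (myBound_integrable hε θ (ε⁻¹ * ((|F θ| + 2 * K * ε * n) * ((3 * n) *
        ((Real.sqrt (2 * Real.pi))⁻¹ ^ n * Real.exp (n / 2)))))) 
      ((hΦ'cont θ).aestronglyMeasurable) ?_
    filter_upwards with w
    exact myBound_pointwise hn hε hF θ w (Metric.mem_ball_self hε)
  -- differentiation under the integral sign
  have main : HasFDerivAt (fun t : Fin n → ℝ => ∫ w, F w * myRho (ε⁻¹ • (w - t)))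
      (∫ w, (F w * (ε⁻¹ * myRho (ε⁻¹ • (w - θ)))) • myL (ε⁻¹ • (w - θ))) θ := by
    refine hasFDerivAt_integral_of_dominated_of_fderiv_le (𝕜 := ℝ) (μ := volume)
      (F := fun t w => F w * myRho (ε⁻¹ • (w - t)))
      (F' := fun t w => (F w * (ε⁻¹ * myRho (ε⁻¹ • (w - t)))) • myL (ε⁻¹ • (w - t)))
      (x₀ := θ)
      (bound := fun w => (ε⁻¹ * ((|F θ| + 2 * K * ε * n) * ((3 * n) *
          ((Real.sqrt (2 * Real.pi))⁻¹ ^ n * Real.exp (n / 2)))))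
        * Real.exp (-(∑ i, ((ε⁻¹ • (w - θ)) i) ^ 2) / 8))
      (Metric.ball_mem_nhds θ hε) ?_ hΦint ((hΦ'cont θ).aestronglyMeasurable) ?_ ?_ ?_
    · exact Filter.Eventually.of_forall fun t => (hΦcont t).aestronglyMeasurable
    · filter_upwards with w
      intro t ht
      exact myBound_pointwise hn hε hF θ w ht
    · exact myBound_integrable hε θ _
    · filter_upwards with w
      intro t ht
      exact myPhi_hasFDerivAt w t (F w)
  -- representation of the smoothed function
  have hrepr : ∀ t : Fin n → ℝ,
      ∫ z, F (t + ε • z) ∂(Measure.pi fun _ : Fin n => gaussianReal 0 1)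
        = (ε ^ n)⁻¹ * ∫ w, F w * myRho (ε⁻¹ • (w - t)) := by
    intro t
    rw [my_integral_pi_gaussian (fun z => F (t + ε • z))]
    have hcv := my_cov hε t (fun z => myRho z * F (t + ε • z))
    have hfun : (fun w : Fin n → ℝ => (fun z => myRho z * F (t + ε • z)) (ε⁻¹ • (w - t)))
        = fun w : Fin n → ℝ => F w * myRho (ε⁻¹ • (w - t)) := by
      funext w
      show myRho (ε⁻¹ • (w - t)) * F (t + ε • (ε⁻¹ • (w - t)))
        = F w * myRho (ε⁻¹ • (w - t))
      rw [smul_inv_smul₀ hεne, add_sub_cancel]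
      ring
    rw [hfun] at hcv
    rw [hcv, ← mul_assoc, inv_mul_cancel₀ (pow_ne_zero n hεne), one_mul]
  refine ⟨(ε ^ n)⁻¹ • ∫ w, (F w * (ε⁻¹ * myRho (ε⁻¹ • (w - θ)))) • myL (ε⁻¹ • (w - θ)),
    ?_, ?_⟩
  · have h1 : (fun t : Fin n → ℝ =>
        ∫ z, F (t + ε • z) ∂(Measure.pi fun _ : Fin n => gaussianReal 0 1))
        = fun t => (ε ^ n)⁻¹ * ∫ w, F w * myRho (ε⁻¹ • (w - t)) := funext hrepr
    rw [h1]
    exact main.const_mul ((ε ^ n)⁻¹)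
  · intro v
    rw [ContinuousLinearMap.smul_apply, ContinuousLinearMap.integral_apply hΦ'int]
    have happ : (fun w : Fin n → ℝ =>
        ((F w * (ε⁻¹ * myRho (ε⁻¹ • (w - θ)))) • myL (ε⁻¹ • (w - θ))) v)
        = fun w : Fin n → ℝ =>
          (fun z => ε⁻¹ * (myRho z * (F (θ + ε • z) * (∑ i, z i * v i)))) (ε⁻¹ • (w - θ)) := by
      funext w
      show (F w * (ε⁻¹ * myRho (ε⁻¹ • (w - θ)))) • myL (ε⁻¹ • (w - θ)) v
        = ε⁻¹ * (myRho (ε⁻¹ • (w - θ)) * (F (θ + ε • (ε⁻¹ • (w - θ)))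
            * (∑ i, (ε⁻¹ • (w - θ)) i * v i)))
      rw [smul_inv_smul₀ hεne, add_sub_cancel, myL_apply, smul_eq_mul]
      ring
    rw [happ, my_cov hε θ (fun z => ε⁻¹ * (myRho z * (F (θ + ε • z) * (∑ i, z i * v i)))),
      my_integral_pi_gaussian (fun z => F (θ + ε • z) * (∑ i, z i * v i)),
      integral_const_mul, smul_eq_mul, ← mul_assoc, ← mul_assoc,
      inv_mul_cancel₀ (pow_ne_zero n hεne), one_mul, one_div]
end

section
/- Let n be a positive natural number, let Y be a nonempty finite set of vectors in ℝⁿ, define F : ℝⁿ → ℝ by F(θ) = max_{y ∈ Y} ⟨y, θ⟩, let ε > 0, and let γⁿ denote the standard Gaussian measure on ℝⁿ (the n-fold product of the one-dimensional standard Gaussian). Define F_ε(θ) = ∫ F(θ + ε z) dγⁿ(z). Then F_ε is differentiable at every θ ∈ ℝⁿ, and for every direction v ∈ ℝⁿ, DF_ε(θ)[v] = ∫ (DF(θ + ε z))[v] dγⁿ(z), where DF(x) denotes the (Fréchet) derivative of F at x, which exists for γⁿ-almost every perturbed point θ + ε z (at points of non-differentiability any fixed value, e.g. 0, may be used without affecting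 the integral). -/
open MeasureTheory ProbabilityTheory Filter Set


lemma gaussianReal_singleton_null (a : ℝ) : gaussianReal 0 1 {a} = 0 :=
  gaussianReal_absolutelyContinuous 0 one_ne_zero (by simp)

lemma gaussian_pi_hyperplane_null {n : ℕ} (c : Fin n → ℝ) (i₀ : Fin n) (hc : c i₀ ≠ 0)
    (d : ℝ) :
    Measure.pi (fun _ : Fin n => gaussianReal 0 1) {z | ∑ i, c i * z i = d} = 0 := by
  obtain ⟨m, rfl⟩ : ∃ m, n = m + 1 := ⟨n - 1, (Nat.succ_pred_eq_of_pos i₀.pos).symm⟩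
  set γ := gaussianReal 0 1 with hγ
  have hmp := measurePreserving_piFinSuccAbove (fun _ : Fin (m + 1) => γ) i₀
  set e := MeasurableEquiv.piFinSuccAbove (fun _ : Fin (m + 1) => ℝ) i₀ with he
  set S : Set (ℝ × (Fin m → ℝ)) :=
    {p | c i₀ * p.1 + ∑ j, c (i₀.succAbove j) * p.2 j = d} with hS
  have hSm : MeasurableSet S := by
    have h1 : Measurable fun p : ℝ × (Fin m → ℝ) =>
        c i₀ * p.1 + ∑ j, c (i₀.succAbove j) * p.2 j := by
      apply Measurable.add
      · exact measurable_fst.const_mul _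
      · exact Finset.measurable_sum _ fun j _ =>
          ((measurable_pi_apply j).comp measurable_snd).const_mul _
    exact measurableSet_eq_fun h1 measurable_const
  have hpre : {z : Fin (m+1) → ℝ | ∑ i, c i * z i = d} = e ⁻¹' S := by
    ext z
    simp only [mem_setOf_eq, mem_preimage, he, MeasurableEquiv.piFinSuccAbove_apply, hS]
    rw [Fin.sum_univ_succAbove (fun i => c i * z i) i₀]
    simp [Fin.insertNthEquiv, Fin.removeNth]
  rw [hpre, ← Measure.map_apply e.measurable hSm, hmp.map_eq,
    Measure.prod_apply_symm hSm]
  have hslice : ∀ w : Fin m → ℝ, γ ((fun x => (x, w)) ⁻¹' S) = 0 := by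
    intro w
    refine measure_mono_null (t := {(d - ∑ j, c (i₀.succAbove j) * w j) / c i₀}) ?_ ?_
    · intro x hx
      simp only [hS, mem_preimage, mem_setOf_eq] at hx
      simp only [mem_singleton_iff]
      field_simp
      linarith
    · exact gaussianReal_singleton_null _
  simp only [hslice]
  simp

lemma lipschitzWith_finset_sup' {α : Type*} [PseudoMetricSpace α] {ι : Type*}
    (s : Finset ι) (hs : s.Nonempty) (f : ι → α → ℝ) {K : NNReal}
    (hf : ∀ i ∈ s, LipschitzWith K (f i)) :
    LipschitzWith K (fun x => s.sup' hs (fun i => f i x)) := by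
  refine LipschitzWith.of_dist_le_mul fun a b => ?_
  rw [Real.dist_eq, abs_sub_le_iff]
  have key : ∀ u v : α, s.sup' hs (fun i => f i u) - s.sup' hs (fun i => f i v)
      ≤ K * dist u v := by
    intro u v
    rw [sub_le_iff_le_add]
    refine Finset.sup'_le _ _ fun i hi => ?_
    have h1 : f i u - f i v ≤ K * dist u v := by
      have := (hf i hi).dist_le_mul u v
      rw [Real.dist_eq] at this
      have := le_trans (le_abs_self _) this
      linarith
    have h2 : f i v ≤ s.sup' hs (fun j => f j v) := Finset.le_sup' (fun j => f j v) hi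
    linarith
  exact ⟨key a b, by simpa [dist_comm] using key b a⟩

lemma integrable_abs_gaussianReal : Integrable (fun x : ℝ => |x|) (gaussianReal 0 1) := by
  rw [gaussianReal_of_var_ne_zero 0 one_ne_zero]
  rw [integrable_withDensity_iff (measurable_gaussianPDF 0 1)
    (ae_of_all _ fun x => ENNReal.ofReal_lt_top)]
  have h : ∀ x : ℝ, |x| * (gaussianPDF 0 1 x).toReal
      = (Real.sqrt (2 * Real.pi))⁻¹ * |x * Real.exp (-(2⁻¹ : ℝ) * x ^ 2)| := by
    intro x
    rw [gaussianPDF, ENNReal.toReal_ofReal (gaussianPDFReal_nonneg _ _ _), gaussianPDFReal]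
    rw [abs_mul, abs_of_pos (Real.exp_pos _)]
    push_cast
    ring_nf
  simp only [h]
  exact ((integrable_mul_exp_neg_mul_sq (by norm_num : (0:ℝ) < 2⁻¹)).abs).const_mul _

lemma map_eval_pi_gaussian {n : ℕ} (i : Fin n) :
    Measure.map (Function.eval i) (Measure.pi fun _ : Fin n => gaussianReal 0 1)
      = gaussianReal 0 1 := by
  refine Measure.ext fun s hs => ?_
  rw [Measure.map_apply (measurable_pi_apply i) hs, Set.eval_preimage, Measure.pi_pi]
  rw [show (fun i_1 => (gaussianReal 0 1) (Function.update (fun _ => Set.univ) i s i_1))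
      = Function.update (fun _ : Fin n => (gaussianReal 0 1) (Set.univ)) i ((gaussianReal 0 1) s) by
    ext j
    rcases eq_or_ne j i with rfl | hj
    · simp
    · simp [Function.update_of_ne hj]]
  rw [Finset.prod_update_of_mem (Finset.mem_univ i)]
  simp

lemma integrable_eval_abs_pi_gaussian {n : ℕ} (i : Fin n) :
    Integrable (fun z : Fin n → ℝ => |z i|)
      (Measure.pi fun _ : Fin n => gaussianReal 0 1) := by
  have := integrable_abs_gaussianReal
  rw [← map_eval_pi_gaussian i] at this
  rw [integrable_map_measure this.aestronglyMeasurable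
    (measurable_pi_apply i).aemeasurable] at this
  exact this

/-- Differentiation under the Gaussian integral for a finite max of linear functions:
the Gaussian smoothing `F_ε(θ) = ∫ F(θ + ε z) dγⁿ(z)` of `F(θ) = max_{y ∈ Y} ⟨y, θ⟩` is
differentiable everywhere, and its derivative in direction `v` is the integral of the
derivative of `F` at the perturbed points (using Lean's `fderiv`, which takes the junk
value `0` at the measure-zero set of points of non-differentiability). -/
theorem gaussian_smoothing_fderiv_eq_integral_fderiv
    (n : ℕ) (hn : 0 < n)
    (Y : Finset (Fin n → ℝ)) (hY : Y.Nonempty)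
    (ε : ℝ) (hε : 0 < ε) (θ : Fin n → ℝ) :
    ∃ D : (Fin n → ℝ) →L[ℝ] ℝ,
      HasFDerivAt
        (fun t => ∫ z, (Y.sup' hY fun y => ∑ i, y i * (t i + ε * z i))
          ∂(Measure.pi fun _ : Fin n => gaussianReal 0 1)) D θ ∧
      ∀ v : Fin n → ℝ,
        D v = ∫ z, (fderiv ℝ (fun t => Y.sup' hY fun y => ∑ i, y i * t i) (θ + ε • z)) v
          ∂(Measure.pi fun _ : Fin n => gaussianReal 0 1) := by
  classical
  set μ : Measure (Fin n → ℝ) := Measure.pi fun _ : Fin n => gaussianReal 0 1 with hμ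
  -- the linear functionals
  set ℓ : (Fin n → ℝ) → ((Fin n → ℝ) →L[ℝ] ℝ) :=
    fun y => ∑ i, y i • ContinuousLinearMap.proj i with hℓdef
  have hℓ : ∀ y t : Fin n → ℝ, ℓ y t = ∑ i, y i * t i := by
    intro y t
    simp [hℓdef, ContinuousLinearMap.sum_apply, ContinuousLinearMap.smul_apply]
  -- the max function, in exactly the statement's syntactic form
  set F : (Fin n → ℝ) → ℝ := fun t => Y.sup' hY fun y => ∑ i, y i * t i with hFdef
  have hFℓ : ∀ t, F t = Y.sup' hY fun y => ℓ y t := by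
    intro t
    exact Finset.sup'_congr hY rfl fun y _ => (hℓ y t).symm
  -- F (t + ε • z) in the statement's form
  have hshift : ∀ t z : Fin n → ℝ,
      (Y.sup' hY fun y => ∑ i, y i * (t i + ε * z i)) = F (t + ε • z) := by
    intro t z
    simp only [hFdef, Pi.add_apply, Pi.smul_apply, smul_eq_mul]
  -- Lipschitz constant
  set K : NNReal := Y.sup' hY fun y => ‖ℓ y‖₊ with hK
  have hFlip : LipschitzWith K F := by
    refine lipschitzWith_finset_sup' Y hY
      (fun (y : Fin n → ℝ) (t : Fin n → ℝ) => ∑ i, y i * t i) (fun y hy => ?_)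
    show LipschitzWith K (fun t : Fin n → ℝ => ∑ i, y i * t i)
    have h1 : LipschitzWith ‖ℓ y‖₊ (ℓ y) := (ℓ y).lipschitz
    have h2 : (fun t : Fin n → ℝ => ∑ i, y i * t i) = ⇑(ℓ y) := by
      funext t; exact (hℓ y t).symm
    rw [h2]
    exact h1.weaken (Finset.le_sup' (fun y => ‖ℓ y‖₊) hy)
  have htrans : ∀ z : Fin n → ℝ, LipschitzWith 1 (fun t : Fin n → ℝ => t + ε • z) :=
    fun z => LipschitzWith.of_dist_le_mul fun a b => by
      simp [dist_add_right]
  have hGlip : ∀ z : Fin n → ℝ, LipschitzWith K (fun t => F (t + ε • z)) := by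
    intro z
    simpa [Function.comp_def] using hFlip.comp (htrans z)
  -- derivative candidates
  set F' : (Fin n → ℝ) → ((Fin n → ℝ) →L[ℝ] ℝ) := fun z => fderiv ℝ F (θ + ε • z) with hF'def
  -- measurability of F'
  have hzmeas : Measurable fun z : Fin n → ℝ => θ + ε • z :=
    (continuous_const.add (continuous_id.const_smul ε)).measurable
  have hF'_meas : AEStronglyMeasurable F' μ :=
    ((measurable_fderiv ℝ F).comp hzmeas).aestronglyMeasurable
  -- integrability of z ↦ F (θ + ε • z)
  have hF_cont : ∀ x : Fin n → ℝ, Continuous fun z : Fin n → ℝ => F (x + ε • z) := by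
    intro x
    exact hFlip.continuous.comp (continuous_const.add (continuous_id.const_smul ε))
  have hF_int : Integrable (fun z => F (θ + ε • z)) μ := by
    refine Integrable.mono' (g := fun z => |F θ| + ((K : ℝ) * ε) * ∑ i, |z i|)
      ?_ ((hF_cont θ).aestronglyMeasurable) (ae_of_all _ fun z => ?_)
    · refine (integrable_const _).add ?_
      exact (integrable_finset_sum Finset.univ fun i _ =>
        integrable_eval_abs_pi_gaussian i).const_mul _
    · have h1 : dist (F (θ + ε • z)) (F θ) ≤ K * dist (θ + ε • z) θ :=
        hFlip.dist_le_mul _ _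
      have h2 : dist (θ + ε • z) θ = ‖ε • z‖ := by
        rw [dist_eq_norm]
        congr 1
        abel
      have h3 : ‖ε • z‖ = ε * ‖z‖ := by
        rw [norm_smul, Real.norm_eq_abs, abs_of_pos hε]
      have h4 : ‖z‖ ≤ ∑ i, |z i| := by
        refine pi_norm_le_iff_of_nonneg (Finset.sum_nonneg fun i _ => abs_nonneg _) |>.2
          fun i => ?_
        rw [Real.norm_eq_abs]
        exact Finset.single_le_sum (fun j _ => abs_nonneg (z j)) (Finset.mem_univ i)
      have h5 : (K : ℝ) * (ε * ‖z‖) ≤ (K : ℝ) * (ε * ∑ i, |z i|) := by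
        have hK0 : (0:ℝ) ≤ (K : ℝ) := K.coe_nonneg
        nlinarith [h4, hε.le, mul_le_mul_of_nonneg_left h4 hε.le]
      rw [Real.dist_eq] at h1
      rw [Real.norm_eq_abs]
      have h6 := abs_sub_abs_le_abs_sub (F (θ + ε • z)) (F θ)
      rw [h2, h3] at h1
      calc |F (θ + ε • z)| ≤ |F θ| + |F (θ + ε • z) - F θ| := by
            have := abs_add_le (F θ) (F (θ + ε • z) - F θ)
            simpa using this
        _ ≤ |F θ| + (K : ℝ) * (ε * ∑ i, |z i|) := add_le_add le_rfl (h1.trans h5)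
        _ = |F θ| + ((K : ℝ) * ε) * ∑ i, |z i| := by ring
  -- a.e. no ties
  have hae : ∀ᵐ z ∂μ, ∀ y ∈ Y, ∀ y' ∈ Y, y ≠ y' →
      (∑ i, y i * (θ i + ε * z i)) ≠ ∑ i, y' i * (θ i + ε * z i) := by
    rw [eventually_all_finset]
    intro y hy
    rw [eventually_all_finset]
    intro y' hy'
    by_cases hyy : y = y'
    · exact Eventually.of_forall fun z hne => absurd hyy hne
    · obtain ⟨i₀, hi₀⟩ : ∃ i, y i ≠ y' i := Function.ne_iff.1 hyy
      set c : Fin n → ℝ := fun i => ε * (y i - y' i) with hc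
      set d : ℝ := ∑ i, (y' i - y i) * θ i with hd
      have hci₀ : c i₀ ≠ 0 := mul_ne_zero hε.ne' (sub_ne_zero.2 hi₀)
      have hnull : μ {z : Fin n → ℝ |
          (∑ i, y i * (θ i + ε * z i)) = ∑ i, y' i * (θ i + ε * z i)} = 0 := by
        refine measure_mono_null ?_ (gaussian_pi_hyperplane_null c i₀ hci₀ d)
        intro z hz
        simp only [mem_setOf_eq] at hz ⊢
        have e1 : ∑ i, (c i * z i - (y' i - y i) * θ i)
            = ∑ i, (y i * (θ i + ε * z i) - y' i * (θ i + ε * z i)) :=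
          Finset.sum_congr rfl fun i _ => by simp only [hc]; ring
        rw [Finset.sum_sub_distrib, Finset.sum_sub_distrib, hz, sub_self] at e1
        rw [← hd] at e1
        linarith [e1]
      have h2 : ∀ᵐ z ∂μ,
          ¬ ((∑ i, y i * (θ i + ε * z i)) = ∑ i, y' i * (θ i + ε * z i)) := by
        rw [ae_iff]
        simpa using hnull
      exact h2.mono fun z hz _ => hz
  -- a.e. differentiability
  have h_diff : ∀ᵐ z ∂μ, HasFDerivAt (fun t => F (t + ε • z)) (F' z) θ := by
    refine hae.mono fun z hz => ?_
    set x : Fin n → ℝ := θ + ε • z with hx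
    have hxi : ∀ i, x i = θ i + ε * z i := fun i => rfl
    obtain ⟨y₀, hy₀Y, hy₀⟩ := Finset.exists_mem_eq_sup' hY (fun y => ℓ y x)
    have hstrict : ∀ y ∈ Y, y ≠ y₀ → ℓ y x < ℓ y₀ x := by
      intro y hy hne
      have hle : ℓ y x ≤ ℓ y₀ x := hy₀ ▸ Finset.le_sup' (fun y => ℓ y x) hy
      have hneq : ℓ y x ≠ ℓ y₀ x := by
        have := hz y hy y₀ hy₀Y hne
        simpa only [hℓ, hxi] using this
      exact lt_of_le_of_ne hle hneq
    have heventu : F =ᶠ[nhds x] ⇑(ℓ y₀) := by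
      have h1 : ∀ᶠ u in nhds x, ∀ y ∈ Y, y ≠ y₀ → ℓ y u < ℓ y₀ u := by
        rw [eventually_all_finset]
        intro y hy
        by_cases hne : y = y₀
        · exact Eventually.of_forall fun u h => absurd hne h
        · have := ContinuousAt.eventually_lt ((ℓ y).continuous.continuousAt)
            ((ℓ y₀).continuous.continuousAt) (hstrict y hy hne)
          exact this.mono fun u hu _ => hu
      refine h1.mono fun u hu => ?_
      rw [hFℓ u]
      refine le_antisymm (Finset.sup'_le _ _ fun y hy => ?_)
        (Finset.le_sup' (fun y => ℓ y u) hy₀Y)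
      by_cases hne : y = y₀
      · rw [hne]
      · exact (hu y hy hne).le
    have hFd : HasFDerivAt F (ℓ y₀) x :=
      (ℓ y₀).hasFDerivAt.congr_of_eventuallyEq heventu
    have hfeq : F' z = ℓ y₀ := hFd.fderiv
    rw [hfeq]
    have hsh : HasFDerivAt (fun t : Fin n → ℝ => t + ε • z)
        (ContinuousLinearMap.id ℝ (Fin n → ℝ)) θ :=
      (hasFDerivAt_id θ).add_const (ε • z)
    have := hFd.comp θ hsh
    simpa [Function.comp_def, ContinuousLinearMap.comp_id] using this
  -- apply differentiation under the integral
  obtain ⟨hF'int, hder⟩ :=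
    hasFDerivAt_integral_of_dominated_loc_of_lip (μ := μ)
      (F := fun t z => F (t + ε • z)) (F' := F') (x₀ := θ)
      (bound := fun _ => (K : ℝ)) (Metric.ball_mem_nhds θ one_pos)
      (Eventually.of_forall fun x => (hF_cont x).aestronglyMeasurable)
      hF_int hF'_meas
      (ae_of_all _ fun z => by
        have := (hGlip z).lipschitzOnWith (s := Metric.ball θ 1)
        simpa [Real.nnabs_coe] using this)
      (integrable_const _) h_diff
  refine ⟨∫ z, F' z ∂μ, ?_, ?_⟩
  · have heq : (fun t => ∫ z, (Y.sup' hY fun y => ∑ i, y i * (t i + ε * z i)) ∂μ)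
        = fun t => ∫ z, F (t + ε • z) ∂μ := by
      funext t
      exact integral_congr_ae (Eventually.of_forall fun z => hshift t z)
    rw [heq]
    exact hder
  · intro v
    rw [ContinuousLinearMap.integral_apply hF'int v]
end
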